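/- arXiv:1401.2387 — 7 statements merged into one kernel-verified Lean document; each statement's English description precedes it below -/
import Mathlib

section
/- Let d ≥ 1 and m ≥ 1, and let f₀,…,f_m ∈ ℝ[s,t] be homogeneous polynomials of degree d, not all zero. Then the image of the associated map, i.e., the set of points [f₀(a,b) : ⋯ : f_m(a,b)] ∈ ℙ^m(ℂ) over all (a,b) ∈ ℂ² with (f₀(a,b),…,f_m(a,b)) ≠ (0,…,0), contains at most 2d points of the empty quadric Q_E = {[z₀ : ⋯ : z_m] ∈ ℙ^m(ℂ) : z₀² + ⋯ + z_m² = 0}. -/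
open MvPolynomial

private lemma eval_smul_homog {σ : Type*} [Fintype σ] {R : Type*} [CommRing R]
    {q : MvPolynomial σ R} {n : ℕ} (hq : q.IsHomogeneous n) (c : R) (x : σ → R) :
    eval (c • x) q = c ^ n * eval x q := by
  rw [eval_eq, eval_eq, Finset.mul_sum]
  apply Finset.sum_congr rfl
  intro d hd
  have hdd := hq (mem_support_iff.mp hd)
  have h1 : ∑ i ∈ d.support, d i = n := by
    rw [← hdd, Finsupp.weight_apply, Finsupp.sum]
    simp only [smul_eq_mul, Pi.one_apply, mul_one]
  calc coeff d q * ∏ i ∈ d.support, (c • x) i ^ d i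
      = coeff d q * ∏ i ∈ d.support, (c ^ d i * x i ^ d i) := by
        simp [Pi.smul_apply, smul_eq_mul, mul_pow]
    _ = c ^ n * (coeff d q * ∏ i ∈ d.support, x i ^ d i) := by
        rw [Finset.prod_mul_distrib, Finset.prod_pow_eq_pow_sum, h1]; ring

private lemma natDeg_aeval_le {q : MvPolynomial (Fin 2) ℂ} {N : ℕ}
    (h : ∀ d ∈ q.support, d 0 ≤ N) :
    (MvPolynomial.aeval ![(Polynomial.X : Polynomial ℂ), 1] q).natDegree ≤ N := by
  have hq : (MvPolynomial.aeval ![Polynomial.X, (1:Polynomial ℂ)]) q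
      = ∑ d ∈ q.support, (MvPolynomial.aeval ![Polynomial.X, (1:Polynomial ℂ)])
        (monomial d (coeff d q)) := by
    rw [← map_sum]
    exact congrArg _ q.as_sum
  rw [hq]
  apply Polynomial.natDegree_sum_le_of_forall_le
  intro d hd
  rw [aeval_monomial]
  have h2 : (Finsupp.prod d fun i k => ![Polynomial.X, (1:Polynomial ℂ)] i ^ k)
      = Polynomial.X ^ (d 0) := by
    rw [Finsupp.prod_fintype _ _ (fun i => pow_zero _), Fin.prod_univ_two]
    simp
  rw [h2]
  refine (Polynomial.natDegree_C_mul_le _ _).trans ?_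
  simpa using h d hd

private lemma eval_aeval_gen (q : MvPolynomial (Fin 2) ℂ) (v : Fin 2 → Polynomial ℂ) (t : ℂ) :
    Polynomial.eval t (MvPolynomial.aeval v q) = eval (fun i => (v i).eval t) q := by
  induction q using MvPolynomial.induction_on with
  | C a => simp
  | add p q hp hq => simp [hp, hq]
  | mul_X p i hp => simp [hp]

private lemma deg_sum_eq {q : MvPolynomial (Fin 2) ℂ} {n : ℕ} (hq : q.IsHomogeneous n)
    {d : Fin 2 →₀ ℕ} (hd : d ∈ q.support) : d 0 + d 1 = n := by
  have hdd := hq (mem_support_iff.mp hd)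
  rw [← hdd, Finsupp.weight_apply, Finsupp.sum]
  simp only [smul_eq_mul, Pi.one_apply, mul_one]
  rw [Finset.sum_subset (Finset.subset_univ _)
      (fun i _ hi => Finsupp.notMem_support_iff.mp hi), Fin.sum_univ_two]

private lemma support_bound {q : MvPolynomial (Fin 2) ℂ} {n : ℕ} (hq : q.IsHomogeneous n)
    (h0 : eval ![(1:ℂ),0] q = 0) : ∀ d ∈ q.support, d 0 + 1 ≤ n := by
  have key : coeff (Finsupp.single 0 n) q = eval ![(1:ℂ),0] q := by
    rw [eval_eq]
    have hprod : (∏ i ∈ (Finsupp.single (0:Fin 2) n).support,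
        (![(1:ℂ),0]) i ^ (Finsupp.single (0:Fin 2) n) i) = 1 := by
      apply Finset.prod_eq_one
      intro i hi
      have hi0 : i = 0 := by simpa using Finsupp.support_single_subset hi
      subst hi0; simp
    rw [show coeff (Finsupp.single (0:Fin 2) n) q
        = coeff (Finsupp.single (0:Fin 2) n) q * ∏ i ∈ (Finsupp.single (0:Fin 2) n).support,
          (![(1:ℂ),0]) i ^ (Finsupp.single (0:Fin 2) n) i by rw [hprod, mul_one]]
    symm
    apply Finset.sum_eq_single
    · intro b hb hbne
      have hsum := deg_sum_eq hq hb
      have hb1 : b 1 ≠ 0 := by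
        intro hb1
        apply hbne
        ext i
        fin_cases i <;> simp [Finsupp.single_apply, hb1] <;> omega
      have hmem : (1 : Fin 2) ∈ b.support := Finsupp.mem_support_iff.mpr hb1
      rw [Finset.prod_eq_zero hmem (by simp [zero_pow hb1]), mul_zero]
    · intro h
      rw [notMem_support_iff.mp h, zero_mul]
  intro d hd
  have hsum := deg_sum_eq hq hd
  rcases Nat.eq_zero_or_pos (d 1) with h1 | h1
  · exfalso
    have hdeq : d = Finsupp.single 0 n := by
      ext i; fin_cases i <;> simp [Finsupp.single_apply, h1] <;> omega
    have hne := mem_support_iff.mp hd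
    rw [hdeq, key, h0] at hne
    exact hne rfl
  · omega

/-- The image of a map `ℙ¹ → ℙ^m` given by real binary forms of degree `d`,
not all zero, contains at most `2d` points of the empty quadric
`{[z] : z₀² + ⋯ + z_m² = 0}`. -/
theorem image_meets_empty_quadric_in_at_most_2d_points (d m : ℕ) (hd : 1 ≤ d) (hm : 1 ≤ m)
    (f : Fin (m + 1) → MvPolynomial (Fin 2) ℝ)
    (hf : ∀ i, (f i).IsHomogeneous d)
    (hne : ∃ i, f i ≠ 0) :
    let image : Set (Projectivization ℂ (Fin (m + 1) → ℂ)) :=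
      {x | ∃ (a b : ℂ) (h : (fun i => eval ![a, b] (map (algebraMap ℝ ℂ) (f i))) ≠ 0),
        x = Projectivization.mk ℂ _ h}
    let QE : Set (Projectivization ℂ (Fin (m + 1) → ℂ)) :=
      {x | ∑ i, (x.rep i) ^ 2 = 0}
    (image ∩ QE).Finite ∧ (image ∩ QE).ncard ≤ 2 * d := by
  intro image QE
  classical
  -- complexified data
  set F : ℂ → ℂ → Fin (m+1) → ℂ :=
    fun a b i => eval ![a,b] (map (algebraMap ℝ ℂ) (f i)) with hF_def
  have hfC : ∀ i, (map (algebraMap ℝ ℂ) (f i)).IsHomogeneous d := fun i => (hf i).map _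
  -- the sum-of-squares form
  set g : MvPolynomial (Fin 2) ℝ := ∑ i, (f i)^2 with hg_def
  have hghom : g.IsHomogeneous (2*d) := by
    apply IsHomogeneous.sum
    intro i _
    have h := (hf i).pow 2
    rwa [mul_comm] at h
  have hg0 : g ≠ 0 := by
    obtain ⟨j, hj⟩ := hne
    intro h
    apply hj
    apply MvPolynomial.funext
    intro x
    simp only [map_zero]
    have hx := congrArg (eval x) h
    simp only [hg_def, map_sum, map_pow, map_zero] at hx
    have hnn : ∀ i ∈ Finset.univ, (0:ℝ) ≤ (eval x (f i))^2 := fun i _ => sq_nonneg _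
    have h0 := (Finset.sum_eq_zero_iff_of_nonneg hnn).mp hx j (Finset.mem_univ j)
    exact (pow_eq_zero_iff two_ne_zero).mp h0
  set gC : MvPolynomial (Fin 2) ℂ := map (algebraMap ℝ ℂ) g with hgC_def
  have hgChom : gC.IsHomogeneous (2*d) := hghom.map _
  have hgC0 : gC ≠ 0 := by
    intro h
    exact hg0 (MvPolynomial.map_injective _ (algebraMap ℝ ℂ).injective (by simpa using h))
  have hgCval : ∀ a b : ℂ, eval ![a,b] gC = ∑ i, (F a b i)^2 := by
    intro a b
    simp only [hgC_def, hg_def, map_sum, map_pow, hF_def]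
  -- scaling of F
  have hFscale : ∀ (c a b : ℂ), F (c*a) (c*b) = c^d • F a b := by
    intro c a b
    funext i
    have h2 : ![c*a, c*b] = c • ![a,b] := by
      funext j; fin_cases j <;> simp
    simp only [hF_def, h2, eval_smul_homog (hfC i), Pi.smul_apply, smul_eq_mul]
  -- scaling of gC values
  have hgCscale : ∀ (c a b : ℂ), eval ![c*a, c*b] gC = c^(2*d) * eval ![a,b] gC := by
    intro c a b
    have h2 : ![c*a, c*b] = c • ![a,b] := by
      funext j; fin_cases j <;> simp
    rw [h2, eval_smul_homog hgChom]
  -- equality of projective points under scaling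
  have hmk : ∀ (v w : Fin (m+1) → ℂ) (hv : v ≠ 0) (hw : w ≠ 0) (c : ℂ) (hc : c ≠ 0),
      w = c • v → Projectivization.mk ℂ w hw = Projectivization.mk ℂ v hv := by
    intro v w hv hw c hc hwc
    rw [Projectivization.mk_eq_mk_iff]
    exact ⟨Units.mk0 c hc, hwc.symm⟩
  -- membership unpacking
  have hmem : ∀ x ∈ image ∩ QE, ∃ a b, ∃ h : F a b ≠ 0,
      x = Projectivization.mk ℂ (F a b) h ∧ eval ![a,b] gC = 0 := by
    rintro x ⟨⟨a, b, h, hx⟩, hq⟩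
    refine ⟨a, b, h, hx, ?_⟩
    rw [hgCval]
    have hmkeq : Projectivization.mk ℂ (F a b) h
        = Projectivization.mk ℂ x.rep x.rep_nonzero := by
      rw [Projectivization.mk_rep]; exact hx.symm
    obtain ⟨u, hu⟩ := (Projectivization.mk_eq_mk_iff _ _ _ _ _).mp hmkeq
    have hq' : ∑ i, (x.rep i)^2 = 0 := hq
    calc ∑ i, (F a b i)^2 = ∑ i, ((u:ℂ) * x.rep i)^2 := by
          rw [← hu]; rfl
      _ = (u:ℂ)^2 * ∑ i, (x.rep i)^2 := by
          rw [Finset.mul_sum]; apply Finset.sum_congr rfl; intro i _; ring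
      _ = 0 := by rw [hq', mul_zero]
  -- (a,b) ≠ 0 whenever F a b ≠ 0
  have hF00 : F 0 0 = 0 := by
    have := hFscale 0 1 1
    simpa [zero_pow (Nat.one_le_iff_ne_zero.mp hd)] using this
  -- the dehomogenized polynomial
  set p : Polynomial ℂ := MvPolynomial.aeval ![(Polynomial.X : Polynomial ℂ), 1] gC with hp_def
  have hpe : ∀ t : ℂ, p.eval t = eval ![t,1] gC := by
    intro t
    rw [hp_def, eval_aeval_gen]
    have hv : (fun i => Polynomial.eval t ((![Polynomial.X, 1] : Fin 2 → Polynomial ℂ) i))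
        = ![t, (1:ℂ)] := by
      funext j; fin_cases j <;> simp
    rw [hv]
  have hp0 : p ≠ 0 := by
    intro hp
    apply hgC0
    apply MvPolynomial.funext
    intro x
    simp only [map_zero]
    have hx12 : x = ![x 0, x 1] := by funext j; fin_cases j <;> simp
    -- the polynomial in the second variable
    set r : Polynomial ℂ := MvPolynomial.aeval ![Polynomial.C (x 0), Polynomial.X] gC with hr_def
    have hre : ∀ t : ℂ, r.eval t = eval ![x 0, t] gC := by
      intro t
      rw [hr_def, eval_aeval_gen]
      have hv : (fun i => Polynomial.eval t ((![Polynomial.C (x 0), Polynomial.X] : Fin 2 → Polynomial ℂ) i))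
          = ![x 0, t] := by
        funext j; fin_cases j <;> simp
      rw [hv]
    have hr0 : r = 0 := by
      apply Polynomial.eq_zero_of_infinite_isRoot
      apply Set.Infinite.mono (s := {t : ℂ | t ≠ 0})
      · intro t ht
        have htne : t ≠ 0 := ht
        have : eval ![x 0, t] gC = 0 := by
          have hx0 : t * (x 0 / t) = x 0 := by field_simp
          have h1 : (![x 0, t] : Fin 2 → ℂ) = ![t * (x 0 / t), t * 1] := by
            rw [hx0, mul_one]
          rw [h1, hgCscale, ← hpe, hp]
          simp
        simpa [Polynomial.IsRoot, hre] using this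
      · have : ({0}ᶜ : Set ℂ).Infinite := Set.Finite.infinite_compl (Set.finite_singleton 0)
        convert this using 1
        ext t; simp
    have := hre (x 1)
    rw [hr0] at this
    simp only [Polynomial.eval_zero] at this
    rw [hx12]
    exact this.symm
  -- default point and parametrized points
  have hone : (fun _ : Fin (m+1) => (1:ℂ)) ≠ 0 := by
    intro h; simpa using congrFun h 0
  set x₀ : Projectivization ℂ (Fin (m+1) → ℂ) := Projectivization.mk ℂ _ hone with hx₀_def
  set ψ : ℂ → Projectivization ℂ (Fin (m+1) → ℂ) :=
    fun t => if h : F t 1 ≠ 0 then Projectivization.mk ℂ (F t 1) h else x₀ with hψ_def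
  set xinf : Projectivization ℂ (Fin (m+1) → ℂ) :=
    if h : F 1 0 ≠ 0 then Projectivization.mk ℂ (F 1 0) h else x₀ with hxinf_def
  set R : Finset ℂ := p.roots.toFinset with hR_def
  have hRcard : R.card ≤ p.natDegree :=
    le_trans (Multiset.toFinset_card_le _) (Polynomial.card_roots' p)
  -- the core: points with b ≠ 0 come from roots
  have hbne : ∀ (a b : ℂ) (h : F a b ≠ 0), b ≠ 0 → eval ![a,b] gC = 0 →
      Projectivization.mk ℂ (F a b) h ∈ ψ '' ↑R := by
    intro a b h hb hz
    have hab : b * (a/b) = a := by field_simp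
    have hFs : F a b = b^d • F (a/b) 1 := by
      have h4 := hFscale b (a/b) 1
      rw [hab, mul_one] at h4
      exact h4
    have hFt : F (a/b) 1 ≠ 0 := by
      intro h0
      rw [hFs, h0, smul_zero] at h
      exact h rfl
    have hroot : (a/b) ∈ R := by
      rw [hR_def, Multiset.mem_toFinset, Polynomial.mem_roots hp0]
      have h4 := hgCscale b (a/b) 1
      rw [hab, mul_one, hz] at h4
      have h2 := (mul_eq_zero.mp h4.symm).resolve_left (pow_ne_zero _ hb)
      rw [Polynomial.IsRoot, hpe]
      exact h2
    have hψt : ψ (a/b) = Projectivization.mk ℂ (F (a/b) 1) hFt := by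
      rw [hψ_def]; exact dif_pos hFt
    refine ⟨a/b, hroot, ?_⟩
    rw [hψt]
    exact (hmk _ _ hFt h (b^d) (pow_ne_zero _ hb) hFs).symm
  -- points with b = 0 are xinf, and force eval ![1,0] gC = 0
  have hbzero : ∀ (a : ℂ) (h : F a 0 ≠ 0), eval ![a,0] gC = 0 →
      Projectivization.mk ℂ (F a 0) h = xinf ∧ eval ![(1:ℂ),0] gC = 0 := by
    intro a h hz
    have ha : a ≠ 0 := by
      intro h0
      rw [h0] at h
      exact h hF00
    have hFs : F a 0 = a^d • F 1 0 := by
      have := hFscale a 1 0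
      simpa using this
    have hF1 : F 1 0 ≠ 0 := by
      intro h0
      rw [hFs, h0, smul_zero] at h
      exact h rfl
    constructor
    · have h3 : xinf = Projectivization.mk ℂ (F 1 0) hF1 := by
        rw [hxinf_def]; exact dif_pos hF1
      rw [h3]
      exact hmk _ _ hF1 h (a^d) (pow_ne_zero _ ha) hFs
    · have hz' : eval ![a * 1, a * 0] gC = 0 := by
        have : (![a * 1, a * 0] : Fin 2 → ℂ) = ![a, 0] := by
          funext j; fin_cases j <;> simp
        rw [this]; exact hz
      rw [hgCscale] at hz'
      exact (mul_eq_zero.mp hz').resolve_left (pow_ne_zero _ ha)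
  -- case split on eval ![1,0] gC
  by_cases hL : eval ![(1:ℂ),0] gC = 0
  · -- possible point at infinity; degree of p drops
    have hdegp : p.natDegree ≤ 2*d - 1 := by
      apply natDeg_aeval_le
      intro dd hdd
      have := support_bound hgChom hL dd hdd
      omega
    have hsub : image ∩ QE ⊆ insert xinf (ψ '' ↑R) := by
      intro x hx
      obtain ⟨a, b, h, hxeq, hz⟩ := hmem x hx
      by_cases hb : b = 0
      · subst hb
        obtain ⟨heq, -⟩ := hbzero a h hz
        rw [hxeq, heq]
        exact Set.mem_insert _ _
      · rw [hxeq]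
        exact Set.mem_insert_of_mem _ (hbne a b h hb hz)
    have hfin : (insert xinf (ψ '' ↑R) : Set _).Finite :=
      Set.Finite.insert _ (R.finite_toSet.image ψ)
    refine ⟨hfin.subset hsub, ?_⟩
    calc (image ∩ QE).ncard ≤ (insert xinf (ψ '' ↑R) : Set _).ncard :=
          Set.ncard_le_ncard hsub hfin
      _ ≤ (ψ '' ↑R : Set _).ncard + 1 := Set.ncard_insert_le _ _
      _ ≤ (↑R : Set ℂ).ncard + 1 := by
          have := Set.ncard_image_le (s := (↑R : Set ℂ)) (f := ψ) R.finite_toSet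
          omega
      _ = R.card + 1 := by rw [Set.ncard_coe_finset]
      _ ≤ 2*d := by
          have := hRcard
          omega
  · -- no point at infinity
    have hdegp : p.natDegree ≤ 2*d := by
      apply natDeg_aeval_le
      intro dd hdd
      have := deg_sum_eq hgChom hdd
      omega
    have hsub : image ∩ QE ⊆ ψ '' ↑R := by
      intro x hx
      obtain ⟨a, b, h, hxeq, hz⟩ := hmem x hx
      by_cases hb : b = 0
      · exfalso
        subst hb
        exact hL (hbzero a h hz).2
      · rw [hxeq]
        exact hbne a b h hb hz
    have hfin : (ψ '' ↑R : Set _).Finite := R.finite_toSet.image ψ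
    refine ⟨hfin.subset hsub, ?_⟩
    calc (image ∩ QE).ncard ≤ (ψ '' ↑R : Set _).ncard := Set.ncard_le_ncard hsub hfin
      _ ≤ (↑R : Set ℂ).ncard := Set.ncard_image_le R.finite_toSet
      _ = R.card := Set.ncard_coe_finset _
      _ ≤ 2*d := le_trans hRcard hdegp
end

section
/- For every n ≥ 1 there exist complex linear subspaces L₁, L₂ ⊆ ℂ^{4n} of dimension 2n, on each of which the quadratic form q(z) = z₀² + ⋯ + z_{4n-1}² vanishes identically, such that the four subspaces L₁, σ(L₁), L₂, σ(L₂) pairwise intersect in {0}, where σ : ℂ^{4n} → ℂ^{4n} is coordinatewise complex conjugation. Consequently, there is no 2-dimensional real linear subspace W ⊆ ℝ^{4n} whose complex span in ℂ^{4n} intersects each of L₁, σ(L₁), L₂, σ(L₂) nontrivially. -/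
/-- The complexification of a real subspace `W ⊆ ℝⁿ`: its complex linear span in `ℂⁿ`. -/
noncomputable def complexSpan (n : ℕ) (W : Submodule ℝ (Fin n → ℝ)) :
    Submodule ℂ (Fin n → ℂ) :=
  Submodule.span ℂ ((fun (w : Fin n → ℝ) => (fun i => (w i : ℂ))) '' (W : Set (Fin n → ℝ)))

/-- Coordinatewise complex conjugation on `ℂⁿ`, as a conjugate-semilinear map. -/
def conjMap (n : ℕ) : (Fin n → ℂ) →ₛₗ[starRingEnd ℂ] (Fin n → ℂ) where
  toFun v := fun i => starRingEnd ℂ (v i)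
  map_add' v w := by funext i; simp
  map_smul' c v := by funext i; simp

open Complex

namespace Ex8

def idx (n : ℕ) (q : Fin n) (r : Fin 4) : Fin (4 * n) :=
  ⟨4 * q.1 + r.1, by have h1 := q.2; have h2 := r.2; omega⟩

def phi (n : ℕ) (sel : Fin 4 → Fin 2) (coef : Fin 4 → ℂ) :
    (Fin n × Fin 2 → ℂ) →ₗ[ℂ] (Fin (4 * n) → ℂ) where
  toFun g k := coef ⟨k.1 % 4, Nat.mod_lt _ (by norm_num)⟩ *
      g (⟨k.1 / 4, by have := k.2; omega⟩, sel ⟨k.1 % 4, Nat.mod_lt _ (by norm_num)⟩)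
  map_add' g h := by funext k; simp [mul_add]
  map_smul' c g := by funext k; simp [smul_eq_mul]; ring

lemma phi_apply_idx {n : ℕ} (sel : Fin 4 → Fin 2) (coef : Fin 4 → ℂ)
    (g : Fin n × Fin 2 → ℂ) (q : Fin n) (r : Fin 4) :
    phi n sel coef g (idx n q r) = coef r * g (q, sel r) := by
  have hq : (4 * q.1 + r.1) / 4 = q.1 := by have := r.2; omega
  have hr : (4 * q.1 + r.1) % 4 = r.1 := by have := r.2; omega
  simp [phi, idx, hq, hr]

noncomputable def L1 (n : ℕ) : Submodule ℂ (Fin (4 * n) → ℂ) :=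
  LinearMap.range (phi n ![0, 0, 1, 1] ![1, I, 1, I])

noncomputable def L2 (n : ℕ) : Submodule ℂ (Fin (4 * n) → ℂ) :=
  LinearMap.range (phi n ![0, 1, 1, 0] ![1, 1, I, I])

lemma eq_idx {n : ℕ} (k : Fin (4 * n)) (r : Fin 4) (hr : k.1 % 4 = r.1) :
    k = idx n ⟨k.1 / 4, by have := k.2; omega⟩ r := by
  apply Fin.ext; simp [idx]; omega

lemma mem_L1 {n : ℕ} {v : Fin (4 * n) → ℂ} :
    v ∈ L1 n ↔ ∀ q : Fin n,
      v (idx n q 1) = I * v (idx n q 0) ∧ v (idx n q 3) = I * v (idx n q 2) := by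
  constructor
  · rintro ⟨g, rfl⟩ q
    simp [phi_apply_idx]
  · intro h
    refine ⟨fun p => v (idx n p.1 (if p.2 = 0 then 0 else 2)), ?_⟩
    funext k
    have h4 : k.1 % 4 < 4 := Nat.mod_lt _ (by norm_num)
    interval_cases hmod : (k.1 % 4)
    · rw [eq_idx k 0 hmod, phi_apply_idx]; simp
    · rw [eq_idx k 1 hmod, phi_apply_idx]
      simp [(h _).1]
    · rw [eq_idx k 2 hmod, phi_apply_idx]; simp
    · rw [eq_idx k 3 hmod, phi_apply_idx]
      simp [(h _).2]

lemma mem_L2 {n : ℕ} {v : Fin (4 * n) → ℂ} :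
    v ∈ L2 n ↔ ∀ q : Fin n,
      v (idx n q 3) = I * v (idx n q 0) ∧ v (idx n q 2) = I * v (idx n q 1) := by
  constructor
  · rintro ⟨g, rfl⟩ q
    simp [phi_apply_idx]
  · intro h
    refine ⟨fun p => v (idx n p.1 (if p.2 = 0 then 0 else 1)), ?_⟩
    funext k
    have h4 : k.1 % 4 < 4 := Nat.mod_lt _ (by norm_num)
    interval_cases hmod : (k.1 % 4)
    · rw [eq_idx k 0 hmod, phi_apply_idx]; simp
    · rw [eq_idx k 1 hmod, phi_apply_idx]; simp
    · rw [eq_idx k 2 hmod, phi_apply_idx]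
      simp [(h _).2]
    · rw [eq_idx k 3 hmod, phi_apply_idx]
      simp [(h _).1]

lemma inj1 {n : ℕ} : Function.Injective (phi n ![0, 0, 1, 1] ![1, I, 1, I]) := by
  rw [← LinearMap.ker_eq_bot, LinearMap.ker_eq_bot']
  intro g hg
  funext p
  obtain ⟨q, s⟩ := p
  fin_cases s
  · have := congrFun hg (idx n q 0); rw [phi_apply_idx] at this; simpa using this
  · have := congrFun hg (idx n q 2); rw [phi_apply_idx] at this; simpa using this

lemma inj2 {n : ℕ} : Function.Injective (phi n ![0, 1, 1, 0] ![1, 1, I, I]) := by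
  rw [← LinearMap.ker_eq_bot, LinearMap.ker_eq_bot']
  intro g hg
  funext p
  obtain ⟨q, s⟩ := p
  fin_cases s
  · have := congrFun hg (idx n q 0); rw [phi_apply_idx] at this; simpa using this
  · have := congrFun hg (idx n q 1); rw [phi_apply_idx] at this; simpa using this

lemma rank1 {n : ℕ} : Module.finrank ℂ (L1 n) = 2 * n := by
  rw [L1, LinearMap.finrank_range_of_inj inj1, Module.finrank_fintype_fun_eq_card]
  simp [Fintype.card_prod, Nat.mul_comm]

lemma rank2 {n : ℕ} : Module.finrank ℂ (L2 n) = 2 * n := by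
  rw [L2, LinearMap.finrank_range_of_inj inj2, Module.finrank_fintype_fun_eq_card]
  simp [Fintype.card_prod, Nat.mul_comm]

def blockEquiv (n : ℕ) : Fin n × Fin 4 ≃ Fin (4 * n) where
  toFun p := idx n p.1 p.2
  invFun k := (⟨k.1 / 4, by have := k.2; omega⟩, ⟨k.1 % 4, Nat.mod_lt _ (by norm_num)⟩)
  left_inv p := by
    obtain ⟨q, r⟩ := p
    have h1 : (4 * q.1 + r.1) / 4 = q.1 := by have := r.2; omega
    have h2 : (4 * q.1 + r.1) % 4 = r.1 := by have := r.2; omega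
    simp [idx, h1, h2]
  right_inv k := by apply Fin.ext; simp [idx]; omega

lemma sum_blocks {n : ℕ} (f : Fin (4 * n) → ℂ) :
    ∑ k, f k = ∑ q : Fin n, ∑ r : Fin 4, f (idx n q r) := by
  rw [← (blockEquiv n).sum_comp f, Fintype.sum_prod_type]
  rfl

lemma iso1 {n : ℕ} {v : Fin (4 * n) → ℂ} (hv : v ∈ L1 n) : ∑ k, (v k) ^ 2 = 0 := by
  rw [sum_blocks (fun k => v k ^ 2)]
  apply Finset.sum_eq_zero
  intro q _
  obtain ⟨h1, h2⟩ := mem_L1.1 hv q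
  rw [Fin.sum_univ_four, h1, h2]
  linear_combination (v (idx n q 0) ^ 2 + v (idx n q 2) ^ 2) * Complex.I_sq

lemma iso2 {n : ℕ} {v : Fin (4 * n) → ℂ} (hv : v ∈ L2 n) : ∑ k, (v k) ^ 2 = 0 := by
  rw [sum_blocks (fun k => v k ^ 2)]
  apply Finset.sum_eq_zero
  intro q _
  obtain ⟨h1, h2⟩ := mem_L2.1 hv q
  rw [Fin.sum_univ_four, h1, h2]
  linear_combination (v (idx n q 0) ^ 2 + v (idx n q 1) ^ 2) * Complex.I_sq

lemma conjMap_apply {N : ℕ} (v : Fin N → ℂ) (k : Fin N) :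
    conjMap N v k = starRingEnd ℂ (v k) := rfl

lemma conjMap_conjMap {N : ℕ} (v : Fin N → ℂ) : conjMap N (conjMap N v) = v := by
  funext k; simp [conjMap_apply]

lemma mem_map_conj {N : ℕ} {L : Submodule ℂ (Fin N → ℂ)} {v : Fin N → ℂ} :
    v ∈ Submodule.map (conjMap N) L ↔ conjMap N v ∈ L := by
  constructor
  · rintro ⟨y, hy, rfl⟩
    rwa [conjMap_conjMap]
  · intro h
    exact ⟨conjMap N v, h, conjMap_conjMap v⟩

lemma mem_conjL1 {n : ℕ} {v : Fin (4 * n) → ℂ} :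
    v ∈ Submodule.map (conjMap (4 * n)) (L1 n) ↔ ∀ q : Fin n,
      v (idx n q 1) = -I * v (idx n q 0) ∧ v (idx n q 3) = -I * v (idx n q 2) := by
  rw [mem_map_conj, mem_L1]
  apply forall_congr'
  intro q
  simp only [conjMap_apply]
  constructor
  · rintro ⟨h1, h2⟩
    constructor
    · have := congrArg (starRingEnd ℂ) h1
      simpa [map_mul, Complex.conj_I, neg_mul] using this
    · have := congrArg (starRingEnd ℂ) h2
      simpa [map_mul, Complex.conj_I, neg_mul] using this
  · rintro ⟨h1, h2⟩
    constructor
    · rw [h1]; simp [map_mul, Complex.conj_I]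
    · rw [h2]; simp [map_mul, Complex.conj_I]

lemma mem_conjL2 {n : ℕ} {v : Fin (4 * n) → ℂ} :
    v ∈ Submodule.map (conjMap (4 * n)) (L2 n) ↔ ∀ q : Fin n,
      v (idx n q 3) = -I * v (idx n q 0) ∧ v (idx n q 2) = -I * v (idx n q 1) := by
  rw [mem_map_conj, mem_L2]
  apply forall_congr'
  intro q
  simp only [conjMap_apply]
  constructor
  · rintro ⟨h1, h2⟩
    constructor
    · have := congrArg (starRingEnd ℂ) h1
      simpa [map_mul, Complex.conj_I, neg_mul] using this
    · have := congrArg (starRingEnd ℂ) h2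
      simpa [map_mul, Complex.conj_I, neg_mul] using this
  · rintro ⟨h1, h2⟩
    constructor
    · rw [h1]; simp [map_mul, Complex.conj_I]
    · rw [h2]; simp [map_mul, Complex.conj_I]

/-- Solving the little 4-variable linear system for "parallel-type" pairs. -/
lemma pairAA {β a b c d : ℂ} (hβ : β ≠ 0)
    (h1 : b = β * a) (h2 : d = β * c) (h3 : b = -β * a) (h4 : d = -β * c) :
    a = 0 ∧ b = 0 ∧ c = 0 ∧ d = 0 := by
  have ha : a = 0 := by
    have h : (2 * β) * a = 0 := by linear_combination h3 - h1
    rcases mul_eq_zero.mp h with h | h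
    · exact absurd h (mul_ne_zero two_ne_zero hβ)
    · exact h
  have hc : c = 0 := by
    have h : (2 * β) * c = 0 := by linear_combination h4 - h2
    rcases mul_eq_zero.mp h with h | h
    · exact absurd h (mul_ne_zero two_ne_zero hβ)
    · exact h
  exact ⟨ha, by rw [h1, ha, mul_zero], hc, by rw [h2, hc, mul_zero]⟩

/-- Solving the little system for "crossed-type" pairs. -/
lemma pairAB {β δ a b c d : ℂ} (hβ2 : β ^ 2 = -1) (hδ : δ ≠ 0)
    (h1 : b = β * a) (h2 : d = β * c) (h3 : d = δ * a) (h4 : c = δ * b) :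
    a = 0 ∧ b = 0 ∧ c = 0 ∧ d = 0 := by
  have ha : a = 0 := by
    have h5 : δ * a = β * (δ * (β * a)) := by rw [← h3, h2, h4, h1]
    have h6 : (2 * δ) * a = 0 := by linear_combination h5 + δ * a * hβ2
    rcases mul_eq_zero.mp h6 with h | h
    · exact absurd h (mul_ne_zero two_ne_zero hδ)
    · exact h
  have hb : b = 0 := by rw [h1, ha, mul_zero]
  have hc : c = 0 := by rw [h4, hb, mul_zero]
  have hd : d = 0 := by rw [h2, hc, mul_zero]
  exact ⟨ha, hb, hc, hd⟩

lemma eq_zero_of_blocks {n : ℕ} {v : Fin (4 * n) → ℂ}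
    (h : ∀ q : Fin n, v (idx n q 0) = 0 ∧ v (idx n q 1) = 0 ∧
      v (idx n q 2) = 0 ∧ v (idx n q 3) = 0) : v = 0 := by
  funext k
  have h4 : k.1 % 4 < 4 := Nat.mod_lt _ (by norm_num)
  interval_cases hmod : (k.1 % 4)
  · rw [eq_idx k 0 hmod]; exact (h _).1
  · rw [eq_idx k 1 hmod]; exact (h _).2.1
  · rw [eq_idx k 2 hmod]; exact (h _).2.2.1
  · rw [eq_idx k 3 hmod]; exact (h _).2.2.2

section disjoint

variable {n : ℕ}

lemma hIneg : (-I : ℂ) ≠ 0 := by simpa using I_ne_zero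

lemma hnegI2 : (-I : ℂ) ^ 2 = -1 := by
  rw [neg_sq, I_sq]

lemma disj_L1_cL1 : L1 n ⊓ Submodule.map (conjMap (4 * n)) (L1 n) = ⊥ := by
  rw [Submodule.eq_bot_iff]
  rintro v hv
  rw [Submodule.mem_inf] at hv
  obtain ⟨h1, h2⟩ := hv
  rw [mem_L1] at h1; rw [mem_conjL1] at h2
  apply eq_zero_of_blocks
  intro q
  obtain ⟨a0, b0, c0, d0⟩ := pairAA I_ne_zero (h1 q).1 (h1 q).2 (h2 q).1 (h2 q).2
  exact ⟨a0, b0, c0, d0⟩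

lemma disj_L2_cL2 : L2 n ⊓ Submodule.map (conjMap (4 * n)) (L2 n) = ⊥ := by
  rw [Submodule.eq_bot_iff]
  rintro v hv
  rw [Submodule.mem_inf] at hv
  obtain ⟨h1, h2⟩ := hv
  rw [mem_L2] at h1; rw [mem_conjL2] at h2
  apply eq_zero_of_blocks
  intro q
  obtain ⟨a0, d0, b0, c0⟩ := pairAA I_ne_zero (h1 q).1 (h1 q).2 (h2 q).1 (h2 q).2
  exact ⟨a0, b0, c0, d0⟩

lemma disj_L1_L2 : L1 n ⊓ L2 n = ⊥ := by
  rw [Submodule.eq_bot_iff]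
  rintro v hv
  rw [Submodule.mem_inf] at hv
  obtain ⟨h1, h2⟩ := hv
  rw [mem_L1] at h1; rw [mem_L2] at h2
  apply eq_zero_of_blocks
  intro q
  exact pairAB I_sq I_ne_zero (h1 q).1 (h1 q).2 (h2 q).1 (h2 q).2

lemma disj_L1_cL2 : L1 n ⊓ Submodule.map (conjMap (4 * n)) (L2 n) = ⊥ := by
  rw [Submodule.eq_bot_iff]
  rintro v hv
  rw [Submodule.mem_inf] at hv
  obtain ⟨h1, h2⟩ := hv
  rw [mem_L1] at h1; rw [mem_conjL2] at h2
  apply eq_zero_of_blocks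
  intro q
  exact pairAB I_sq hIneg (h1 q).1 (h1 q).2 (h2 q).1 (h2 q).2

lemma disj_cL1_L2 : Submodule.map (conjMap (4 * n)) (L1 n) ⊓ L2 n = ⊥ := by
  rw [Submodule.eq_bot_iff]
  rintro v hv
  rw [Submodule.mem_inf] at hv
  obtain ⟨h1, h2⟩ := hv
  rw [mem_conjL1] at h1; rw [mem_L2] at h2
  apply eq_zero_of_blocks
  intro q
  exact pairAB hnegI2 I_ne_zero (h1 q).1 (h1 q).2 (h2 q).1 (h2 q).2

lemma disj_cL1_cL2 :
    Submodule.map (conjMap (4 * n)) (L1 n) ⊓ Submodule.map (conjMap (4 * n)) (L2 n) = ⊥ := by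
  rw [Submodule.eq_bot_iff]
  rintro v hv
  rw [Submodule.mem_inf] at hv
  obtain ⟨h1, h2⟩ := hv
  rw [mem_conjL1] at h1; rw [mem_conjL2] at h2
  apply eq_zero_of_blocks
  intro q
  exact pairAB hnegI2 hIneg (h1 q).1 (h1 q).2 (h2 q).1 (h2 q).2

end disjoint

lemma conj_mem_complexSpan {N : ℕ} (W : Submodule ℝ (Fin N → ℝ)) {u : Fin N → ℂ}
    (hu : u ∈ complexSpan N W) : conjMap N u ∈ complexSpan N W := by
  induction hu using Submodule.span_induction with
  | mem x hx =>
    obtain ⟨w, hw, rfl⟩ := hx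
    have h : conjMap N (fun i => (w i : ℂ)) = fun i => (w i : ℂ) := by
      funext i; simp [conjMap_apply, Complex.conj_ofReal]
    rw [h]
    exact Submodule.subset_span ⟨w, hw, rfl⟩
  | zero => simpa using (complexSpan N W).zero_mem
  | add x y _ _ hx hy => rw [map_add]; exact add_mem hx hy
  | smul c x _ hx => rw [LinearMap.map_smulₛₗ]; exact Submodule.smul_mem _ _ hx

lemma finrank_complexSpan_le {N : ℕ} (W : Submodule ℝ (Fin N → ℝ))
    (hW : Module.finrank ℝ W = 2) : Module.finrank ℂ (complexSpan N W) ≤ 2 := by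
  have b := Module.finBasisOfFinrankEq ℝ W hW
  set u : Fin 2 → (Fin N → ℂ) :=
    fun s => (fun i => (((b s : W) : Fin N → ℝ) i : ℂ)) with hu
  have hle : complexSpan N W ≤ Submodule.span ℂ (Set.range u) := by
    rw [complexSpan]
    apply Submodule.span_le.2
    rintro _ ⟨w, hw, rfl⟩
    have hrepr := Module.Basis.sum_repr b ⟨w, hw⟩
    have hco := congrArg (fun x : W => (x : Fin N → ℝ)) hrepr
    rw [Fin.sum_univ_two] at hco
    simp only [Submodule.coe_add, SetLike.val_smul] at hco
    have hfw : (fun i => (w i : ℂ)) =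
        ((b.repr ⟨w, hw⟩ 0 : ℝ) : ℂ) • u 0 + ((b.repr ⟨w, hw⟩ 1 : ℝ) : ℂ) • u 1 := by
      funext i
      have := congrFun hco i
      simp only [Pi.add_apply, Pi.smul_apply, smul_eq_mul] at this ⊢
      rw [hu]
      push_cast [← this]
      ring
    show (fun i => (w i : ℂ)) ∈ Submodule.span ℂ (Set.range u)
    rw [hfw]
    exact Submodule.add_mem _
      (Submodule.smul_mem _ _ (Submodule.subset_span ⟨0, rfl⟩))
      (Submodule.smul_mem _ _ (Submodule.subset_span ⟨1, rfl⟩))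
  calc Module.finrank ℂ (complexSpan N W)
      ≤ Module.finrank ℂ (Submodule.span ℂ (Set.range u)) := Submodule.finrank_mono hle
    _ ≤ Fintype.card (Fin 2) := by
        simpa [Set.finrank] using finrank_range_le_card u
    _ = 2 := by simp

end Ex8

/-- For every `n ≥ 1` there are `2n`-dimensional isotropic subspaces
`L₁, L₂ ⊆ ℂ^{4n}` such that `L₁, σ(L₁), L₂, σ(L₂)` are pairwise disjoint; consequently no
real projective line meets all four of them. -/
theorem exists_conjugate_pairs_no_real_line (n : ℕ) (hn : 1 ≤ n) :
    ∃ L₁ L₂ : Submodule ℂ (Fin (4 * n) → ℂ),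
      Module.finrank ℂ L₁ = 2 * n ∧ Module.finrank ℂ L₂ = 2 * n ∧
      (∀ v ∈ L₁, ∑ k, (v k) ^ 2 = 0) ∧ (∀ v ∈ L₂, ∑ k, (v k) ^ 2 = 0) ∧
      (∀ i j : Fin 4, i ≠ j →
        (![L₁, Submodule.map (conjMap (4 * n)) L₁, L₂,
            Submodule.map (conjMap (4 * n)) L₂] i) ⊓
        (![L₁, Submodule.map (conjMap (4 * n)) L₁, L₂,
            Submodule.map (conjMap (4 * n)) L₂] j) = ⊥) ∧
      ¬ ∃ W : Submodule ℝ (Fin (4 * n) → ℝ), Module.finrank ℝ W = 2 ∧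
        ∀ i : Fin 4, complexSpan (4 * n) W ⊓
          (![L₁, Submodule.map (conjMap (4 * n)) L₁, L₂,
              Submodule.map (conjMap (4 * n)) L₂] i) ≠ ⊥ := by
  classical
  refine ⟨Ex8.L1 n, Ex8.L2 n, Ex8.rank1, Ex8.rank2,
    fun v hv => Ex8.iso1 hv, fun v hv => Ex8.iso2 hv, ?_, ?_⟩
  · have h1 := Ex8.disj_L1_cL1 (n := n)
    have h2 := Ex8.disj_L1_L2 (n := n)
    have h3 := Ex8.disj_L1_cL2 (n := n)
    have h4 := Ex8.disj_cL1_L2 (n := n)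
    have h5 := Ex8.disj_cL1_cL2 (n := n)
    have h6 := Ex8.disj_L2_cL2 (n := n)
    intro i j hij
    fin_cases i <;> fin_cases j <;> simp_all [inf_comm]
  · rintro ⟨W, hW2, hmeet⟩
    have h0 := hmeet 0
    have h2 := hmeet 2
    simp only [Matrix.cons_val_zero, Matrix.cons_val_two, Matrix.tail_cons,
      Matrix.head_cons] at h0 h2
    obtain ⟨x, hx, hx0⟩ := Submodule.ne_bot_iff _ |>.1 h0
    rw [Submodule.mem_inf] at hx
    obtain ⟨hxU, hxL1⟩ := hx
    obtain ⟨z, hzm, hz0⟩ := Submodule.ne_bot_iff _ |>.1 h2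
    rw [Submodule.mem_inf] at hzm
    obtain ⟨hzU, hzL2⟩ := hzm
    have hsxU : conjMap (4 * n) x ∈ complexSpan (4 * n) W :=
      Ex8.conj_mem_complexSpan W hxU
    have hsx0 : conjMap (4 * n) x ≠ 0 := by
      intro h
      apply hx0
      have h' := congrArg (conjMap (4 * n)) h
      rwa [Ex8.conjMap_conjMap, map_zero] at h'
    have hsxcL1 : conjMap (4 * n) x ∈ Submodule.map (conjMap (4 * n)) (Ex8.L1 n) :=
      ⟨x, hxL1, rfl⟩
    have hLI : LinearIndependent ℂ ![x, conjMap (4 * n) x] := by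
      rw [LinearIndependent.pair_iff]
      intro s t hst
      have hmem : s • x ∈ Ex8.L1 n ⊓ Submodule.map (conjMap (4 * n)) (Ex8.L1 n) := by
        rw [Submodule.mem_inf]
        constructor
        · exact Submodule.smul_mem _ _ hxL1
        · have h' : s • x = -(t • conjMap (4 * n) x) := eq_neg_of_add_eq_zero_left hst
          rw [h']
          exact Submodule.neg_mem _ (Submodule.smul_mem _ _ hsxcL1)
      rw [Ex8.disj_L1_cL1, Submodule.mem_bot] at hmem
      have hs : s = 0 := by
        rcases smul_eq_zero.1 hmem with h | h
        exacts [h, absurd h hx0]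
      refine ⟨hs, ?_⟩
      rw [hs, zero_smul, zero_add] at hst
      rcases smul_eq_zero.1 hst with h | h
      exacts [h, absurd h hsx0]
    have hspanle : Submodule.span ℂ (Set.range ![x, conjMap (4 * n) x]) ≤
        complexSpan (4 * n) W := by
      rw [Submodule.span_le]
      rintro _ ⟨i, rfl⟩
      fin_cases i
      · exact hxU
      · exact hsxU
    have hrk : Module.finrank ℂ (complexSpan (4 * n) W) ≤
        Module.finrank ℂ (Submodule.span ℂ (Set.range ![x, conjMap (4 * n) x])) := by
      rw [finrank_span_eq_card hLI]
      simpa using Ex8.finrank_complexSpan_le W hW2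
    have hspan := Submodule.eq_of_le_of_finrank_le hspanle hrk
    have hzspan : z ∈ Submodule.span ℂ (Set.range ![x, conjMap (4 * n) x]) := by
      rw [hspan]; exact hzU
    rw [Submodule.mem_span_range_iff_exists_fun] at hzspan
    obtain ⟨cc, hcc⟩ := hzspan
    rw [Fin.sum_univ_two] at hcc
    simp only [Matrix.cons_val_zero, Matrix.cons_val_one, Matrix.head_cons] at hcc
    set α := cc 0 with hαdef
    set β := cc 1 with hβdef
    have hz : z = α • x + β • conjMap (4 * n) x := hcc.symm
    have hα : α ≠ 0 := by
      intro h
      apply hz0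
      have hzmem : z ∈ Submodule.map (conjMap (4 * n)) (Ex8.L1 n) ⊓ Ex8.L2 n := by
        rw [Submodule.mem_inf]
        refine ⟨?_, hzL2⟩
        rw [hz, h, zero_smul, zero_add]
        exact Submodule.smul_mem _ _ hsxcL1
      rwa [Ex8.disj_cL1_L2, Submodule.mem_bot] at hzmem
    have hzk : ∀ k, z k = α * x k + β * starRingEnd ℂ (x k) := by
      intro k
      rw [hz]
      simp [Ex8.conjMap_apply]
    have h2I : (2 * Complex.I : ℂ) ≠ 0 := mul_ne_zero two_ne_zero Complex.I_ne_zero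
    apply hx0
    apply Ex8.eq_zero_of_blocks
    intro q
    obtain ⟨hx1, hx3⟩ := Ex8.mem_L1.1 hxL1 q
    obtain ⟨hz3, hz2⟩ := Ex8.mem_L2.1 hzL2 q
    rw [hzk (Ex8.idx n q 3), hzk (Ex8.idx n q 0)] at hz3
    rw [hzk (Ex8.idx n q 2), hzk (Ex8.idx n q 1)] at hz2
    set a := x (Ex8.idx n q 0) with ha
    set c := x (Ex8.idx n q 2) with hc
    rw [hx3] at hz3
    rw [hx1] at hz2
    simp only [map_mul, Complex.conj_I] at hz3 hz2
    have h1 : α * c = β * starRingEnd ℂ a := by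
      apply mul_left_cancel₀ h2I
      linear_combination hz3 + Complex.I * hz2 +
        Complex.I * (α * a - β * starRingEnd ℂ a) * Complex.I_sq
    have h2' : α * a = -(β * starRingEnd ℂ c) := by
      apply mul_left_cancel₀ h2I
      linear_combination -hz3 + Complex.I * hz2 +
        Complex.I * (α * a - β * starRingEnd ℂ a) * Complex.I_sq
    have hconj : starRingEnd ℂ α * starRingEnd ℂ c = starRingEnd ℂ β * a := by
      have h' := congrArg (starRingEnd ℂ) h1
      simpa [map_mul] using h'
    have hfacne : (starRingEnd ℂ α * α + starRingEnd ℂ β * β) ≠ 0 := by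
      have hrw : (starRingEnd ℂ α * α + starRingEnd ℂ β * β) =
          ((Complex.normSq α + Complex.normSq β : ℝ) : ℂ) := by
        rw [← Complex.normSq_eq_conj_mul_self, ← Complex.normSq_eq_conj_mul_self]
        push_cast
        ring
      rw [hrw, Complex.ofReal_ne_zero]
      have hp := Complex.normSq_pos.2 hα
      have hq' := Complex.normSq_nonneg β
      intro hzero
      linarith
    have ha0 : a = 0 := by
      have h' : (starRingEnd ℂ α * α + starRingEnd ℂ β * β) * a = 0 := by
        linear_combination starRingEnd ℂ α * h2' - β * hconj
      rcases mul_eq_zero.1 h' with h'' | h''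
      · exact absurd h'' hfacne
      · exact h''
    have hc0 : c = 0 := by
      have h' : α * c = 0 := by rw [h1, ha0]; simp
      rcases mul_eq_zero.1 h' with h'' | h''
      · exact absurd h'' hα
      · exact h''
    exact ⟨ha0, by rw [hx1, ha0, mul_zero], hc0, by rw [hx3, hc0, mul_zero]⟩
end

section
/- Let n ≥ 1 and let q(z) = z₀² + ⋯ + z_{4n-1}² on ℂ^{4n}. Let L₁, …, L₆ ⊆ ℂ^{4n} be complex linear subspaces of dimension 2n such that Lᵢ ∩ Lⱼ = {0} for all i ≠ j, and such that q vanishes identically on each Lᵢ. Then there do not exist homogeneous polynomials f₀,…,f_{4n-1} ∈ ℝ[s,t] of degree 2, not all zero, such that for every j = 1,…,6 there is some (a_j, b_j) ∈ ℂ² with (f₀(a_j,b_j), …, f_{4n-1}(a_j,b_j)) a nonzero vector of L_j. In other words, no conic in ℙ^{4n-1}(ℂ) parametrized by real quadratic forms meets all six projectivized subspaces ℙ(L₁), …, ℙ(L₆). -/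
open MvPolynomial

lemma eval_smul_of_isHomogeneous {σ R : Type*} [Fintype σ] [CommSemiring R]
    {p : MvPolynomial σ R} {m : ℕ} (hp : p.IsHomogeneous m) (c : R) (x : σ → R) :
    eval (c • x) p = c ^ m * eval x p := by
  rw [eval_eq', eval_eq', Finset.mul_sum]
  refine Finset.sum_congr rfl fun d hd => ?_
  have hdeg : ∑ i, d i = m := by
    have h1 : d.degree = m := by
      by_contra h
      exact mem_support_iff.mp hd (hp.coeff_eq_zero h)
    rw [← h1, Finsupp.degree]
    exact (Finset.sum_subset (Finset.subset_univ _) (by simp +contextual [Finsupp.notMem_support_iff])).symm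
  calc MvPolynomial.coeff d p * ∏ i, (c • x) i ^ d i
      = MvPolynomial.coeff d p * ∏ i, (c ^ d i * x i ^ d i) := by
        simp [mul_pow]
    _ = c ^ m * (MvPolynomial.coeff d p * ∏ i, x i ^ d i) := by
        rw [Finset.prod_mul_distrib, Finset.prod_pow_eq_pow_sum, hdeg]; ring

lemma eval_eval₂C {R : Type*} [CommSemiring R] {σ : Type*} (g : σ → Polynomial R)
    (G : MvPolynomial σ R) (r : R) :
    Polynomial.eval r (eval₂ Polynomial.C g G) = eval (fun i => Polynomial.eval r (g i)) G := by
  rw [show Polynomial.eval r (eval₂ Polynomial.C g G)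
      = Polynomial.evalRingHom r (eval₂ Polynomial.C g G) from rfl,
    eval₂_comp_left]
  have h : (Polynomial.evalRingHom r).comp Polynomial.C = RingHom.id R := by
    ext a; simp
  rw [h]
  rfl

lemma natDegree_dehom {m : ℕ} {G : MvPolynomial (Fin 2) ℂ} (hG : G.IsHomogeneous m) :
    (eval₂ Polynomial.C ![Polynomial.X, 1] G).natDegree ≤ m := by
  rw [eval₂_eq]
  apply Polynomial.natDegree_sum_le_of_forall_le
  intro d hd
  have hdeg : d 0 ≤ m := by
    have h1 : d.degree = m := by
      by_contra h
      exact mem_support_iff.mp hd (hG.coeff_eq_zero h)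
    rw [← h1, Finsupp.degree]
    by_cases h0 : (0 : Fin 2) ∈ d.support
    · exact Finset.single_le_sum (fun i _ => Nat.zero_le _) h0
    · simp [Finsupp.notMem_support_iff.mp h0]
  apply Polynomial.natDegree_mul_le.trans
  have h2 : (∏ i ∈ d.support, (![Polynomial.X, (1:Polynomial ℂ)]) i ^ d i).natDegree ≤ d 0 := by
    apply (Polynomial.natDegree_prod_le _ _).trans
    calc ∑ i ∈ d.support, ((![Polynomial.X, (1:Polynomial ℂ)]) i ^ d i).natDegree
        ≤ ∑ i ∈ d.support, (if i = 0 then d 0 else 0) := by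
          apply Finset.sum_le_sum; intro i _
          fin_cases i <;> simp
      _ ≤ d 0 := by
          rw [Finset.sum_ite_eq' d.support (0 : Fin 2) (fun _ => d 0)]
          split <;> simp
  simpa using h2.trans hdeg


/-- If `L₁,…,L₆` are pairwise disjoint `2n`-dimensional isotropic subspaces of
`ℂ^{4n}` for the standard quadratic form, then no conic parametrized by real binary quadratic
forms meets all six projectivized subspaces. -/
theorem no_real_conic_meets_six_isotropic_subspaces (n : ℕ) (hn : 1 ≤ n)
    (L : Fin 6 → Submodule ℂ (Fin (4 * n) → ℂ))
    (hdim : ∀ i, Module.finrank ℂ (L i) = 2 * n)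
    (hdisj : ∀ i j, i ≠ j → L i ⊓ L j = ⊥)
    (hiso : ∀ i, ∀ v ∈ L i, ∑ k, (v k) ^ 2 = 0) :
    ¬ ∃ f : Fin (4 * n) → MvPolynomial (Fin 2) ℝ,
      (∀ i, (f i).IsHomogeneous 2) ∧ (∃ i, f i ≠ 0) ∧
      ∀ j : Fin 6, ∃ a b : ℂ,
        (fun i => eval ![a, b] (map (algebraMap ℝ ℂ) (f i))) ≠ 0 ∧
        (fun i => eval ![a, b] (map (algebraMap ℝ ℂ) (f i))) ∈ L j := by
  classical
  rintro ⟨f, hhom, ⟨i0, hf0⟩, hmeet⟩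
  choose a b hvne hvmem using hmeet
  set g : Fin (4 * n) → MvPolynomial (Fin 2) ℂ := fun i => map (algebraMap ℝ ℂ) (f i) with hg
  have hghom : ∀ i, (g i).IsHomogeneous 2 := fun i => (hhom i).map _
  set G : MvPolynomial (Fin 2) ℂ := ∑ i, (g i) ^ 2 with hGdef
  have hGhom : G.IsHomogeneous 4 := by
    apply IsHomogeneous.sum
    intro i _
    exact (hghom i).pow 2
  have hGeval : ∀ x : Fin 2 → ℂ, eval x G = ∑ i, (eval x (g i)) ^ 2 := by
    intro x; simp [hGdef]
  -- non-proportionality of the six points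
  have hprop : ∀ j k : Fin 6, j ≠ k → ∀ c : ℂ, ![a k, b k] = c • ![a j, b j] → False := by
    intro j k hjk c hc
    have hvmemk : (fun i => eval ![a k, b k] (g i)) ∈ L j := by
      have h1 : (fun i => eval ![a k, b k] (g i)) = (c ^ 2) • fun i => eval ![a j, b j] (g i) := by
        funext i
        rw [hc, eval_smul_of_isHomogeneous (hghom i)]
        rfl
      rw [h1]
      exact (L j).smul_mem _ (hvmem j)
    have hbot : (fun i => eval ![a k, b k] (g i)) ∈ L k ⊓ L j := ⟨hvmem k, hvmemk⟩
    rw [hdisj k j (Ne.symm hjk), Submodule.mem_bot] at hbot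
    exact hvne k hbot
  -- each point is nonzero
  have hab : ∀ j, a j ≠ 0 ∨ b j ≠ 0 := by
    intro j
    by_contra h
    push_neg at h
    apply hvne j
    funext i
    have hx : ![a j, b j] = (0 : ℂ) • ![a j, b j] := by
      funext m; fin_cases m <;> simp [h.1, h.2]
    show eval ![a j, b j] (g i) = 0
    rw [hx, eval_smul_of_isHomogeneous (hghom i)]
    simp
  -- at most one point has b = 0
  set S : Finset (Fin 6) := Finset.univ.filter (fun j => b j ≠ 0) with hS
  have hScard : 5 ≤ S.card := by
    have hcompl : (Finset.univ.filter (fun j => ¬ b j ≠ 0)).card ≤ 1 := by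
      apply Finset.card_le_one.mpr
      intro j hj k hk
      simp only [Finset.mem_filter, not_not] at hj hk
      by_contra hjk
      have haj : a j ≠ 0 := (hab j).resolve_right (by simp [hj.2])
      have hak : a k ≠ 0 := (hab k).resolve_right (by simp [hk.2])
      apply hprop j k hjk (a k / a j)
      funext m; fin_cases m <;> simp [hj.2, hk.2, div_mul_cancel₀, haj]
    have h2 := Finset.card_filter_add_card_filter_not (s := (Finset.univ : Finset (Fin 6)))
      (p := fun j => b j ≠ 0)
    have h6 : (Finset.univ : Finset (Fin 6)).card = 6 := by simp
    have h7 : S.card = (Finset.univ.filter (fun j => b j ≠ 0)).card := rfl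
    omega
  -- the distinct roots
  set r : Fin 6 → ℂ := fun j => a j / b j with hr
  have hinj : Set.InjOn r S := by
    intro j hj k hk hrjk
    by_contra hjk
    have hbj : b j ≠ 0 := by simpa [hS] using hj
    have hbk : b k ≠ 0 := by simpa [hS] using hk
    apply hprop j k hjk (b k / b j)
    have hak : a k * b j = b k * a j := by
      have h := hrjk
      simp only [hr] at h; rw [div_eq_div_iff hbj hbk] at h
      linear_combination -h
    funext m; fin_cases m
    · show a k = b k / b j * a j
      field_simp
      linear_combination hak
    · show b k = b k / b j * b j
      field_simp
  set P : Polynomial ℂ := eval₂ Polynomial.C ![Polynomial.X, 1] G with hP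
  have hPeval : ∀ u : ℂ, P.eval u = eval ![u, 1] G := by
    intro u
    rw [hP, eval_eval₂C]
    have harg : (fun i => Polynomial.eval u (![Polynomial.X, 1] i)) = ![u, 1] := by
      funext m; fin_cases m <;> simp
    rw [harg]
  -- scaling identity
  have hscale : ∀ s t : ℂ, t ≠ 0 → eval ![s, t] G = t ^ 4 * P.eval (s / t) := by
    intro s t ht
    have hx : ![s, t] = t • ![s / t, 1] := by
      funext m; fin_cases m <;> simp [mul_div_cancel₀] <;> field_simp
    rw [hx, eval_smul_of_isHomogeneous hGhom, hPeval]
  -- G vanishes at the six points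
  have hGzero : ∀ j, eval ![a j, b j] G = 0 := by
    intro j
    rw [hGeval]
    exact hiso j _ (hvmem j)
  -- P vanishes on the image of S under r
  have hProots : ∀ x ∈ S.image r, P.eval x = 0 := by
    intro x hx
    obtain ⟨j, hj, rfl⟩ := Finset.mem_image.mp hx
    have hbj : b j ≠ 0 := by simpa [hS] using hj
    have := hGzero j
    rw [hscale (a j) (b j) hbj] at this
    have h4 : (b j) ^ 4 ≠ 0 := pow_ne_zero _ hbj
    exact (mul_eq_zero.mp this).resolve_left h4
  have hP0 : P = 0 := by
    apply Polynomial.eq_zero_of_natDegree_lt_card_of_eval_eq_zero' P (S.image r) hProots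
    have : (S.image r).card = S.card := Finset.card_image_of_injOn hinj
    have hd : P.natDegree ≤ 4 := natDegree_dehom hGhom
    omega
  -- G vanishes everywhere
  have hGall : ∀ y : Fin 2 → ℂ, eval y G = 0 := by
    have key : ∀ s t : ℂ, eval ![s, t] G = 0 := by
      intro s t
      by_cases ht : t = 0
      · set Q : Polynomial ℂ := eval₂ Polynomial.C ![Polynomial.C s, Polynomial.X] G with hQ
        have hQeval : ∀ u : ℂ, Q.eval u = eval ![s, u] G := by
          intro u
          rw [hQ, eval_eval₂C]
          have harg : (fun i => Polynomial.eval u (![Polynomial.C s, Polynomial.X] i)) = ![s, u] := by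
            funext m; fin_cases m <;> simp
          rw [harg]
        have hQ0 : Q = 0 := by
          apply Polynomial.eq_zero_of_infinite_isRoot
          apply Set.Infinite.mono (s := {u : ℂ | u ≠ 0})
          · intro u hu
            have : Q.eval u = 0 := by
              rw [hQeval, hscale s u hu, hP0]
              simp
            exact this
          · have h : ({(0:ℂ)}ᶜ : Set ℂ).Infinite := (Set.finite_singleton (0:ℂ)).infinite_compl
            exact h
        rw [ht, ← hQeval 0, hQ0]
        simp
      · rw [hscale s t ht, hP0]
        simp
    intro y
    have hy : y = ![y 0, y 1] := by
      funext m; fin_cases m <;> rfl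
    rw [hy]; exact key _ _
  -- descend to ℝ
  have hreal : ∀ (x : Fin 2 → ℝ) (i : Fin (4 * n)),
      eval (fun m => algebraMap ℝ ℂ (x m)) (g i) = algebraMap ℝ ℂ (eval x (f i)) := by
    intro x i
    rw [hg, eval_map]
    have h := eval₂_comp_left (algebraMap ℝ ℂ) (RingHom.id ℝ) x (f i)
    rw [eval₂_id] at h
    simp only [RingHom.comp_id] at h
    exact h.symm
  have hfzero : ∀ (x : Fin 2 → ℝ) (i : Fin (4 * n)), eval x (f i) = 0 := by
    intro x i
    have h0 : ∑ i, (eval x (f i)) ^ 2 = 0 := by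
      apply (algebraMap ℝ ℂ).injective
      rw [map_sum, map_zero]
      have hG := hGall (fun m => algebraMap ℝ ℂ (x m))
      rw [hGeval] at hG
      rw [← hG]
      exact Finset.sum_congr rfl fun i _ => by rw [map_pow, hreal]
    have hnn : ∀ i ∈ Finset.univ, (0:ℝ) ≤ (eval x (f i)) ^ 2 := fun i _ => sq_nonneg _
    have := (Finset.sum_eq_zero_iff_of_nonneg hnn).mp h0 i (Finset.mem_univ i)
    exact pow_eq_zero_iff (by norm_num) |>.mp this
  apply hf0
  apply MvPolynomial.funext
  intro x
  rw [hfzero x i0]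
  simp
end

section
/- There exist bihomogeneous polynomials F, G ∈ ℝ[s,t,u,v] of bidegree (2,1) (homogeneous of degree 2 in (s,t) and of degree 1 in (u,v)) such that F and G have exactly four common zeros in ℙ¹(ℂ) × ℙ¹(ℂ), and none of these common zeros lies in ℙ¹(ℝ) × ℙ¹(ℝ). -/
open MvPolynomial

/-- A point of `ℙ¹(ℂ)` is real if it has a representative with real coordinates. -/
def IsRealPoint (x : Projectivization ℂ (Fin 2 → ℂ)) : Prop :=
  ∃ (v : Fin 2 → ℝ) (h : (fun i => (v i : ℂ)) ≠ 0),
    x = Projectivization.mk ℂ _ h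

/- Auxiliary material -/

private lemma vec_ne_zero (z : ℂ) : (![z, 1] : Fin 2 → ℂ) ≠ 0 := by
  intro h
  have := congrFun h 1
  simp at this

/-- The point `[z : 1]` of `ℙ¹(ℂ)`. -/
noncomputable def pt (z : ℂ) : Projectivization ℂ (Fin 2 → ℂ) :=
  Projectivization.mk ℂ ![z, 1] (vec_ne_zero z)

lemma pt_inj {z w : ℂ} (h : pt z = pt w) : z = w := by
  rw [pt, pt, Projectivization.mk_eq_mk_iff] at h
  obtain ⟨a, ha⟩ := h
  have h0 := congrFun ha 0
  have h1 := congrFun ha 1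
  simp [Units.smul_def] at h0 h1
  rw [← h0, h1]
  simp

lemma rep_pt (z : ℂ) : ∃ u : ℂˣ, (pt z).rep 0 = u * z ∧ (pt z).rep 1 = u := by
  obtain ⟨u, hu⟩ := Projectivization.exists_smul_eq_mk_rep ℂ ![z, 1] (vec_ne_zero z)
  refine ⟨u, ?_, ?_⟩
  · have := congrFun hu 0
    simpa [Units.smul_def, pt] using this.symm
  · have := congrFun hu 1
    simpa [Units.smul_def, pt] using this.symm

/-- `[z:1]` is a real point only if `z` is real. -/
lemma im_eq_zero_of_isRealPoint {z : ℂ} (h : IsRealPoint (pt z)) : z.im = 0 := by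
  obtain ⟨v, hv, hmk⟩ := h
  rw [pt, Projectivization.mk_eq_mk_iff] at hmk
  obtain ⟨a, ha⟩ := hmk
  have h0 := congrFun ha 0
  have h1 := congrFun ha 1
  simp only [Units.smul_def, Pi.smul_apply, smul_eq_mul, Matrix.cons_val_zero,
    Matrix.cons_val_one, Matrix.head_cons] at h0 h1
  -- (a : ℂ) * v 0 = z, (a : ℂ) * v 1 = 1
  have hzv : z * (v 1 : ℂ) = (v 0 : ℂ) := by
    calc z * (v 1 : ℂ) = ((a : ℂ) * v 0) * v 1 := by rw [h0]
    _ = ((a : ℂ) * v 1) * v 0 := by ring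
    _ = (v 0 : ℂ) := by rw [h1, one_mul]
  have him := congrArg Complex.im hzv
  simp [Complex.mul_im] at him
  have hv1 : v 1 ≠ 0 := by
    intro h'
    rw [h'] at h1
    simp at h1
  rcases him with him | him
  · exact him
  · exact absurd him hv1

/-- The four solutions of `z ^ 4 = -4`. -/
lemma roots_char (z : ℂ) : z ^ 4 = -4 ↔
    z = 1 + Complex.I ∨ z = -(1 + Complex.I) ∨ z = 1 - Complex.I ∨ z = -(1 - Complex.I) := by
  have hI := Complex.I_sq
  constructor
  · intro hz
    have hfac : (z ^ 2 - 2 * Complex.I) * (z ^ 2 + 2 * Complex.I) = 0 := by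
      linear_combination hz - 4 * hI
    rcases mul_eq_zero.1 hfac with h | h
    · have : (z - (1 + Complex.I)) * (z + (1 + Complex.I)) = 0 := by
        linear_combination h - hI
      rcases mul_eq_zero.1 this with h' | h'
      · exact Or.inl (by linear_combination h')
      · exact Or.inr (Or.inl (by linear_combination h'))
    · have : (z - (1 - Complex.I)) * (z + (1 - Complex.I)) = 0 := by
        linear_combination h - hI
      rcases mul_eq_zero.1 this with h' | h'
      · exact Or.inr (Or.inr (Or.inl (by linear_combination h')))
      · exact Or.inr (Or.inr (Or.inr (by linear_combination h')))
  · rintro (rfl | rfl | rfl | rfl)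
    · linear_combination (Complex.I ^ 2 + 4 * Complex.I + 5) * hI
    · linear_combination (Complex.I ^ 2 + 4 * Complex.I + 5) * hI
    · linear_combination (Complex.I ^ 2 - 4 * Complex.I + 5) * hI
    · linear_combination (Complex.I ^ 2 - 4 * Complex.I + 5) * hI

/-- There exist real bihomogeneous forms `F, G` of bidegree `(2,1)` on
`ℙ¹ × ℙ¹` with exactly four common complex zeros, none of them real. -/
theorem exists_bidegree21_curves_no_real_intersection :
    ∃ F G : MvPolynomial (Fin 4) ℝ,
      (∀ m ∈ F.support, m 0 + m 1 = 2 ∧ m 2 + m 3 = 1) ∧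
      (∀ m ∈ G.support, m 0 + m 1 = 2 ∧ m 2 + m 3 = 1) ∧
      let Z : Set (Projectivization ℂ (Fin 2 → ℂ) × Projectivization ℂ (Fin 2 → ℂ)) :=
        {x | eval ![x.1.rep 0, x.1.rep 1, x.2.rep 0, x.2.rep 1]
              (map (algebraMap ℝ ℂ) F) = 0 ∧
             eval ![x.1.rep 0, x.1.rep 1, x.2.rep 0, x.2.rep 1]
              (map (algebraMap ℝ ℂ) G) = 0}
      Z.ncard = 4 ∧ ∀ z ∈ Z, ¬ (IsRealPoint z.1 ∧ IsRealPoint z.2) := by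
  classical
  -- F = 2 t² u - s² v,  G = s² u + 2 t² v
  set F : MvPolynomial (Fin 4) ℝ :=
    monomial (Finsupp.single 1 2 + Finsupp.single 2 1) 2 -
    monomial (Finsupp.single 0 2 + Finsupp.single 3 1) 1 with hFdef
  set G : MvPolynomial (Fin 4) ℝ :=
    monomial (Finsupp.single 0 2 + Finsupp.single 2 1) 1 +
    monomial (Finsupp.single 1 2 + Finsupp.single 3 1) 2 with hGdef
  have hprod : ∀ (m : Fin 4 →₀ ℕ) (x : Fin 4 → ℂ),
      (m.prod fun i k => x i ^ k) = ∏ i, x i ^ m i := fun m x =>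
    Finsupp.prod_fintype _ _ (fun i => pow_zero _)
  have hFeval : ∀ a b c d : ℂ,
      eval ![a, b, c, d] (map (algebraMap ℝ ℂ) F) = 2 * b ^ 2 * c - a ^ 2 * d := by
    intro a b c d
    simp only [hFdef, map_sub, map_monomial, eval_monomial, hprod, Fin.prod_univ_four,
      Finsupp.add_apply, Finsupp.single_apply]
    norm_num [Fin.ext_iff]
    simp (config := { decide := true }) only [if_false, if_true, pow_zero, mul_one, Matrix.cons_val]
    ring
  have hGeval : ∀ a b c d : ℂ,
      eval ![a, b, c, d] (map (algebraMap ℝ ℂ) G) = a ^ 2 * c + 2 * b ^ 2 * d := by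
    intro a b c d
    simp only [hGdef, map_add, map_monomial, eval_monomial, hprod, Fin.prod_univ_four,
      Finsupp.add_apply, Finsupp.single_apply]
    norm_num [Fin.ext_iff]
    simp (config := { decide := true }) only [if_false, if_true, pow_zero, mul_one, Matrix.cons_val]
    ring
  refine ⟨F, G, ?_, ?_, ?_⟩
  · intro m hm
    have h := MvPolynomial.support_sub _ _ _ hm
    rw [Finset.mem_union] at h
    rcases h with h | h <;>
    · have := MvPolynomial.support_monomial_subset h
      simp only [Finset.mem_singleton] at this
      subst this
      simp [Finsupp.add_apply, Finsupp.single_apply]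
  · intro m hm
    have h := MvPolynomial.support_add hm
    rw [Finset.mem_union] at h
    rcases h with h | h <;>
    · have := MvPolynomial.support_monomial_subset h
      simp only [Finset.mem_singleton] at this
      subst this
      simp [Finsupp.add_apply, Finsupp.single_apply]
  intro Z
  -- The zero set is the image of the four roots of z⁴ = -4.
  have hZ : Z = (fun z => (pt z, pt (z ^ 2 / 2))) '' {z : ℂ | z ^ 4 = -4} := by
    ext ⟨P, Q⟩
    simp only [Z, Set.mem_setOf_eq, Set.mem_image, hFeval, hGeval]
    constructor
    · rintro ⟨h1, h2⟩
      set a := P.rep 0 with ha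
      set b := P.rep 1 with hb
      set c := Q.rep 0 with hc
      set d := Q.rep 1 with hd
      have hPne := P.rep_nonzero
      have hQne := Q.rep_nonzero
      have hcd : c ≠ 0 ∨ d ≠ 0 := by
        by_contra h
        push_neg at h
        apply hQne
        funext i
        fin_cases i
        · exact h.1
        · exact h.2
      have hkey : a ^ 4 + 4 * b ^ 4 = 0 := by
        have hc4 : (a ^ 4 + 4 * b ^ 4) * c = 0 := by linear_combination 2 * b ^ 2 * h1 + a ^ 2 * h2
        have hd4 : (a ^ 4 + 4 * b ^ 4) * d = 0 := by linear_combination 2 * b ^ 2 * h2 - a ^ 2 * h1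
        rcases hcd with hc' | hd'
        · exact (mul_eq_zero.1 hc4).resolve_right hc'
        · exact (mul_eq_zero.1 hd4).resolve_right hd'
      have hbne : b ≠ 0 := by
        intro hb0
        have ha0 : a = 0 := by
          have : a ^ 4 = 0 := by linear_combination hkey - 4 * b ^ 3 * hb0
          exact pow_eq_zero_iff (by norm_num) |>.1 this
        apply hPne
        funext i
        fin_cases i
        · exact ha0
        · exact hb0
      have hdne : d ≠ 0 := by
        intro hd0
        have hc0 : c = 0 := by
          have : (2 * b ^ 2) * c = 0 := by linear_combination h1 + a ^ 2 * hd0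
          rcases mul_eq_zero.1 this with h' | h'
          · exact absurd h' (by simpa using pow_ne_zero 2 hbne)
          · exact h'
        apply hQne
        funext i
        fin_cases i
        · exact hc0
        · exact hd0
      refine ⟨a / b, ?_, ?_⟩
      · field_simp
        linear_combination hkey
      · have hPrep : P.rep = ![a, b] := by
          funext i; fin_cases i <;> rfl
        have hQrep : Q.rep = ![c, d] := by
          funext i; fin_cases i <;> rfl
        have hP : P = pt (a / b) := by
          conv_lhs => rw [← Projectivization.mk_rep P]
          rw [pt]
          apply (Projectivization.mk_eq_mk_iff ℂ _ _ _ _).2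
          refine ⟨Units.mk0 b hbne, ?_⟩
          rw [hPrep]
          funext i
          fin_cases i <;> simp [Units.smul_def]
          field_simp
        have hQ : Q = pt ((a / b) ^ 2 / 2) := by
          conv_lhs => rw [← Projectivization.mk_rep Q]
          rw [pt]
          apply (Projectivization.mk_eq_mk_iff ℂ _ _ _ _).2
          refine ⟨Units.mk0 d hdne, ?_⟩
          rw [hQrep]
          funext i
          fin_cases i <;> simp [Units.smul_def]
          field_simp
          linear_combination -h1
        exact Prod.ext hP.symm hQ.symm
    · rintro ⟨z, hz, heq⟩
      obtain ⟨hP, hQ⟩ := Prod.mk.injEq .. ▸ heq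
      obtain ⟨u, hu0, hu1⟩ := rep_pt z
      obtain ⟨w, hw0, hw1⟩ := rep_pt (z ^ 2 / 2)
      rw [← hP, ← hQ]
      rw [hu0, hu1, hw0, hw1]
      constructor
      · ring
      · field_simp
        linear_combination (u : ℂ) ^ 2 * (w : ℂ) * hz
  rw [hZ]
  constructor
  · -- cardinality
    rw [Set.ncard_image_of_injOn (fun x _ y _ h => pt_inj (congrArg Prod.fst h))]
    have : {z : ℂ | z ^ 4 = -4} =
        {1 + Complex.I, -(1 + Complex.I), 1 - Complex.I, -(1 - Complex.I)} := by
      ext z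
      simp [roots_char, Set.mem_insert_iff]
    rw [this]
    rw [Set.ncard_insert_of_notMem (by norm_num [Complex.ext_iff]),
      Set.ncard_insert_of_notMem (by norm_num [Complex.ext_iff]),
      Set.ncard_insert_of_notMem (by norm_num [Complex.ext_iff]),
      Set.ncard_singleton]
  · -- no real points
    rintro ⟨P, Q⟩ ⟨z, hz, heq⟩ ⟨_, hQreal⟩
    obtain ⟨hP, hQ⟩ := Prod.mk.injEq .. ▸ heq
    rw [← hQ] at hQreal
    have him := im_eq_zero_of_isRealPoint hQreal
    -- (z²/2)² = z⁴/4 = -1, but im = 0 gives a real square equal to -1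
    have hz' : z ^ 4 = -4 := hz
    have hsq : (z ^ 2 / 2) ^ 2 = -1 := by
      field_simp
      linear_combination hz'
    set w := z ^ 2 / 2 with hw
    have hre := congrArg Complex.re hsq
    simp [Complex.sq_norm, pow_two, Complex.mul_re, him] at hre
    nlinarith [sq_nonneg w.re, hre]
end

section
/- Let q(z) = z₀² + z₁² + z₂² + z₃² on ℂ⁴ and let Q_E = {[z] ∈ ℙ³(ℂ) : q(z) = 0} be the empty quadric surface. Let p₁, p₂, p₃, p₄ ∈ Q_E be four distinct points, and let ℓ₁, ℓ₂, ℓ₃, ℓ₄ ⊆ ℂ⁴ be 2-dimensional complex subspaces with ℓᵢ ∩ ℓⱼ = {0} for i ≠ j, on each of which q vanishes identically, such that no pₖ lies in any ℙ(ℓⱼ). Then there do not exist homogeneous polynomials f₀,…,f₃ ∈ ℝ[s,t] of degree 3, not all zero, such that the image of the associated map contains p₁, p₂, p₃, p₄ and meets each of ℙ(ℓ₁), …, ℙ(ℓ₄). -/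
open MvPolynomial

lemma deg2 (d : Fin 2 →₀ ℕ) : d.degree = d 0 + d 1 := by
  rw [Finsupp.degree_apply]
  rw [Finset.sum_subset (Finset.subset_univ d.support)]
  · exact Fin.sum_univ_two d
  · intro x _ hx
    simpa using Finsupp.notMem_support_iff.mp hx

lemma aux_eval_smul {n : ℕ} {φ : MvPolynomial (Fin 2) ℂ} (h : φ.IsHomogeneous n)
    (c : ℂ) (x : Fin 2 → ℂ) : eval (fun i => c * x i) φ = c ^ n * eval x φ := by
  conv_lhs => rw [φ.as_sum]
  conv_rhs => rw [φ.as_sum]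
  rw [map_sum, map_sum, Finset.mul_sum]
  refine Finset.sum_congr rfl fun d hd => ?_
  rw [eval_monomial, eval_monomial]
  have hdeg : d 0 + d 1 = n := by
    rw [← deg2, Finsupp.degree_eq_weight_one]
    exact h (mem_support_iff.mp hd)
  have h1 : ∀ (y : Fin 2 → ℂ), d.prod (fun i k => y i ^ k) = y 0 ^ d 0 * y 1 ^ d 1 := by
    intro y
    rw [Finsupp.prod_fintype _ _ (fun i => pow_zero _)]
    exact Fin.prod_univ_two _
  rw [h1, h1, ← hdeg]
  ring

lemma prop_pair {a b a' b' : ℂ} (h : (a, b) ≠ 0) (h' : (a', b') ≠ 0)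
    (hab : a * b' = a' * b) : ∃ c : ℂ, c ≠ 0 ∧ a' = c * a ∧ b' = c * b := by
  rcases eq_or_ne a 0 with ha | ha
  · have hb : b ≠ 0 := fun hb => h (by simp [ha, hb, Prod.ext_iff])
    have ha' : a' = 0 := by
      have := hab
      rw [ha, zero_mul] at this
      rcases mul_eq_zero.mp this.symm with h1 | h1
      · exact h1
      · exact absurd h1 hb
    refine ⟨b' / b, ?_, ?_, ?_⟩
    · intro hc
      have : b' = 0 := by
        field_simp at hc
        simpa using hc
      exact h' (by simp [ha', this, Prod.ext_iff])
    · simp [ha, ha']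
    · field_simp
  · refine ⟨a' / a, ?_, ?_, ?_⟩
    · intro hc
      have ha'0 : a' = 0 := by field_simp at hc; simpa using hc
      have hb'0 : b' = 0 := by
        have := hab
        rw [ha'0, zero_mul] at this
        rcases mul_eq_zero.mp this with h1 | h1
        · exact absurd h1 ha
        · exact h1
      exact h' (by simp [ha'0, hb'0, Prod.ext_iff])
    · field_simp
    · field_simp
      rw [mul_comm b' a, hab]

lemma key_poly {G : MvPolynomial (Fin 2) ℂ} (hG : G.IsHomogeneous 6) (hne : G ≠ 0) :
    ∃ P : Polynomial ℂ, P ≠ 0 ∧ P.natDegree ≤ 6 ∧ ∀ z : ℂ, P.eval z = eval ![z, 1] G := by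
  classical
  set P : Polynomial ℂ := eval₂Hom Polynomial.C ![Polynomial.X, 1] G with hPdef
  have hsupdeg : ∀ d ∈ G.support, d 0 + d 1 = 6 := by
    intro d hd
    rw [← deg2, Finsupp.degree_eq_weight_one]
    exact hG (mem_support_iff.mp hd)
  have hP : P = ∑ d ∈ G.support, Polynomial.C (coeff d G) * Polynomial.X ^ (d 0) := by
    rw [hPdef]
    conv_lhs => rw [G.as_sum]
    rw [map_sum]
    refine Finset.sum_congr rfl fun d hd => ?_
    rw [eval₂Hom_monomial]
    congr 1
    rw [Finsupp.prod_fintype _ _ (fun i => pow_zero _), Fin.prod_univ_two]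
    simp
  refine ⟨P, ?_, ?_, ?_⟩
  · obtain ⟨d₀, hd₀⟩ := (support_nonempty).mpr hne
    have hcoeff : P.coeff (d₀ 0) = coeff d₀ G := by
      rw [hP, Polynomial.finset_sum_coeff]
      rw [Finset.sum_eq_single d₀]
      · simp
      · intro d hd hdne
        rw [Polynomial.coeff_C_mul, Polynomial.coeff_X_pow]
        have : ¬ (d₀ 0 = d 0) := by
          intro he
          apply hdne
          ext i
          fin_cases i
          · exact he.symm
          · show d 1 = d₀ 1
            have h1 := hsupdeg d hd
            have h2 := hsupdeg d₀ hd₀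
            omega
        simp [this]
      · intro h
        exact absurd hd₀ h
    intro h0
    rw [h0] at hcoeff
    simp only [Polynomial.coeff_zero] at hcoeff
    exact (mem_support_iff.mp hd₀) hcoeff.symm
  · rw [hP]
    refine Polynomial.natDegree_sum_le_of_forall_le _ _ fun d hd => ?_
    refine le_trans (Polynomial.natDegree_C_mul_le _ _) ?_
    rw [Polynomial.natDegree_X_pow]
    have := hsupdeg d hd
    omega
  · intro z
    rw [hP]
    rw [Polynomial.eval_finset_sum]
    conv_rhs => rw [G.as_sum]
    rw [map_sum]
    refine Finset.sum_congr rfl fun d hd => ?_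
    rw [eval_monomial, Finsupp.prod_fintype _ _ (fun i => pow_zero _), Fin.prod_univ_two]
    simp

/-- The image in `ℙ³(ℂ)` of the map associated to real binary forms `f₀,…,f₃`. -/
def imageSet (f : Fin 4 → MvPolynomial (Fin 2) ℝ) :
    Set (Projectivization ℂ (Fin 4 → ℂ)) :=
  {x | ∃ (a b : ℂ) (h : (fun i => eval ![a, b] (map (algebraMap ℝ ℂ) (f i))) ≠ 0),
    x = Projectivization.mk ℂ _ h}

/-- Four distinct points on the empty quadric `Q_E ⊆ ℙ³(ℂ)` and four
pairwise disjoint isotropic lines avoiding these points cannot all be met by a rational cubic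
curve parametrized by real forms. -/
theorem no_real_cubic_through_four_points_and_four_lines
    (p : Fin 4 → Projectivization ℂ (Fin 4 → ℂ))
    (hpdist : Function.Injective p)
    (hpQ : ∀ k, ∑ i, ((p k).rep i) ^ 2 = 0)
    (ℓ : Fin 4 → Submodule ℂ (Fin 4 → ℂ))
    (hdim : ∀ j, Module.finrank ℂ (ℓ j) = 2)
    (hdisj : ∀ i j, i ≠ j → ℓ i ⊓ ℓ j = ⊥)
    (hiso : ∀ j, ∀ v ∈ ℓ j, ∑ k, (v k) ^ 2 = 0)
    (havoid : ∀ k j, (p k).rep ∉ ℓ j) :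
    ¬ ∃ f : Fin 4 → MvPolynomial (Fin 2) ℝ,
      (∀ i, (f i).IsHomogeneous 3) ∧ (∃ i, f i ≠ 0) ∧
      (∀ k, p k ∈ imageSet f) ∧
      (∀ j, ∃ a b : ℂ,
        (fun i => eval ![a, b] (map (algebraMap ℝ ℂ) (f i))) ≠ 0 ∧
        (fun i => eval ![a, b] (map (algebraMap ℝ ℂ) (f i))) ∈ ℓ j) := by
  classical
  rintro ⟨f, hhom, ⟨i₀, hi₀⟩, himg, hline⟩
  set F : Fin 4 → MvPolynomial (Fin 2) ℂ := fun i => map (algebraMap ℝ ℂ) (f i) with hF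
  set G : MvPolynomial (Fin 2) ℂ := ∑ i, (F i) ^ 2 with hGdef
  have hFhom : ∀ i, (F i).IsHomogeneous 3 := fun i => (hhom i).map _
  have hGhom : G.IsHomogeneous 6 := by
    refine IsHomogeneous.sum _ _ _ fun i _ => ?_
    have h := (hFhom i).pow 2
    norm_num at h
    exact h
  have hGeval : ∀ w : Fin 2 → ℂ, eval w G = ∑ i, (eval w (F i)) ^ 2 := by
    intro w
    rw [hGdef, map_sum]
    simp [map_pow]
  have hGne : G ≠ 0 := by
    have hg : (∑ i, (f i) ^ 2 : MvPolynomial (Fin 2) ℝ) ≠ 0 := by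
      intro h0
      apply hi₀
      apply MvPolynomial.funext
      intro x
      rw [map_zero]
      have hx := congrArg (eval x) h0
      rw [map_sum, map_zero] at hx
      have hz := (Finset.sum_eq_zero_iff_of_nonneg
        (fun i _ => by rw [map_pow]; positivity)).mp hx i₀ (Finset.mem_univ _)
      rw [map_pow] at hz
      exact pow_eq_zero_iff two_ne_zero |>.mp hz
    intro h0
    apply hg
    have hmap : G = map (algebraMap ℝ ℂ) (∑ i, (f i) ^ 2) := by
      rw [map_sum, hGdef]
      simp [hF, map_pow]
    rw [hmap] at h0
    exact MvPolynomial.map_injective _ (algebraMap ℝ ℂ).injective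
      (h0.trans (map_zero (MvPolynomial.map (algebraMap ℝ ℂ))).symm)
  set v : ℂ → ℂ → (Fin 4 → ℂ) := fun a b => fun i => eval ![a, b] (F i) with hvdef
  have key : ∀ k : (Fin 4) ⊕ (Fin 4), ∃ ab : ℂ × ℂ,
      v ab.1 ab.2 ≠ 0 ∧ eval ![ab.1, ab.2] G = 0 ∧
      (∀ k', k = Sum.inl k' → ∃ c : ℂ, c ≠ 0 ∧ (p k').rep = c • v ab.1 ab.2) ∧
      (∀ j, k = Sum.inr j → v ab.1 ab.2 ∈ ℓ j) := by
    rintro (k' | j)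
    · obtain ⟨a, b, h, hx⟩ := himg k'
      have hrep : ∃ c : ℂ, c ≠ 0 ∧ (p k').rep = c • v a b := by
        have hmk : Projectivization.mk ℂ ((p k').rep) (p k').rep_nonzero
            = Projectivization.mk ℂ (v a b) h := by
          rw [Projectivization.mk_rep]
          exact hx
        obtain ⟨c, hc⟩ := (Projectivization.mk_eq_mk_iff' ℂ _ _ _ _).mp hmk
        refine ⟨c, ?_, hc.symm⟩
        intro h0
        apply (p k').rep_nonzero
        rw [← hc, h0, zero_smul]
      obtain ⟨c, hc0, hcrep⟩ := hrep
      refine ⟨(a, b), h, ?_, fun k'' hk => by cases hk; exact ⟨c, hc0, hcrep⟩,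
        fun j hj => by simp at hj⟩
      have h1 := hpQ k'
      rw [hcrep] at h1
      have h2 : ∑ i, ((c • v a b) i) ^ 2 = c ^ 2 * ∑ i, (v a b i) ^ 2 := by
        rw [Finset.mul_sum]
        refine Finset.sum_congr rfl fun i _ => ?_
        simp only [Pi.smul_apply, smul_eq_mul]
        ring
      rw [h2] at h1
      have h3 : ∑ i, (v a b i) ^ 2 = 0 := by
        rcases mul_eq_zero.mp h1 with hh | hh
        · exact absurd (pow_eq_zero_iff two_ne_zero |>.mp hh) hc0
        · exact hh
      rw [hGeval]
      exact h3
    · obtain ⟨a, b, h, hmem⟩ := hline j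
      refine ⟨(a, b), h, ?_, fun k'' hk => by simp at hk,
        fun j' hj => by cases hj; exact hmem⟩
      rw [hGeval]
      exact hiso j _ hmem
  choose ab hv hG0 hrep hmem using key
  set A : Fin 4 ⊕ Fin 4 → ℂ := fun k => (ab k).1 with hA
  set B : Fin 4 ⊕ Fin 4 → ℂ := fun k => (ab k).2 with hB
  have hzero : ∀ i, eval ![(0:ℂ), 0] (F i) = 0 := by
    intro i
    have h0 : ![(0:ℂ), 0] = fun j => (0:ℂ) * ![(0:ℂ), 0] j := by
      funext j
      fin_cases j <;> norm_num
    rw [h0, aux_eval_smul (hFhom i)]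
    simp
  have habne : ∀ k, (A k, B k) ≠ (0 : ℂ × ℂ) := by
    intro k hk
    apply hv k
    have h1 : A k = 0 := congrArg Prod.fst hk
    have h2 : B k = 0 := congrArg Prod.snd hk
    funext i
    show eval ![A k, B k] (F i) = 0
    rw [h1, h2]
    exact hzero i
  have hscale : ∀ k k', A k * B k' = A k' * B k →
      ∃ c : ℂ, c ≠ 0 ∧ v (A k') (B k') = c • v (A k) (B k) := by
    intro k k' h
    obtain ⟨c, hc0, hca, hcb⟩ := prop_pair (habne k) (habne k') h
    refine ⟨c ^ 3, pow_ne_zero _ hc0, ?_⟩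
    funext i
    show eval ![A k', B k'] (F i) = (c ^ 3 • v (A k) (B k)) i
    rw [hca, hcb]
    have heq : ![c * A k, c * B k] = fun j => c * ![A k, B k] j := by
      funext j
      fin_cases j <;> simp
    rw [heq, aux_eval_smul (hFhom i)]
    simp only [Pi.smul_apply, smul_eq_mul]
    rfl
  have hprop : ∀ k k', k ≠ k' → A k * B k' ≠ A k' * B k := by
    intro k k' hkk' h
    obtain ⟨c, hc0, hvv⟩ := hscale k k' h
    clear_value v
    match k, k', hkk', hvv with
    | Sum.inl k1, Sum.inl k2, hkk', hvv =>
      have hk12 : k1 ≠ k2 := fun hh => hkk' (by rw [hh])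
      obtain ⟨c1, hc10, hr1⟩ := hrep (Sum.inl k1) k1 rfl
      obtain ⟨c2, hc20, hr2⟩ := hrep (Sum.inl k2) k2 rfl
      apply hk12
      apply hpdist
      have hsm : (c1 / (c2 * c)) • (p k2).rep = (p k1).rep := by
        rw [hr2, hvv, hr1, smul_smul, smul_smul]
        congr 1
        field_simp
      rw [← Projectivization.mk_rep (p k1), ← Projectivization.mk_rep (p k2)]
      exact (Projectivization.mk_eq_mk_iff' ℂ _ _ _ _).mpr ⟨_, hsm⟩
    | Sum.inl k1, Sum.inr j, hkk', hvv =>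
      apply havoid k1 j
      obtain ⟨c1, hc10, hr1⟩ := hrep (Sum.inl k1) k1 rfl
      rw [hr1]
      have hvk : v (A (.inl k1)) (B (.inl k1)) = c⁻¹ • v (A (.inr j)) (B (.inr j)) := by
        rw [hvv, smul_smul, inv_mul_cancel₀ hc0, one_smul]
      rw [hvk]
      exact Submodule.smul_mem _ _ (Submodule.smul_mem _ _ (hmem _ j rfl))
    | Sum.inr j, Sum.inl k1, hkk', hvv =>
      apply havoid k1 j
      obtain ⟨c1, hc10, hr1⟩ := hrep (Sum.inl k1) k1 rfl
      rw [hr1, hvv]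
      exact Submodule.smul_mem _ _ (Submodule.smul_mem _ _ (hmem _ j rfl))
    | Sum.inr j1, Sum.inr j2, hkk', hvv =>
      have hj12 : j1 ≠ j2 := fun hh => hkk' (by rw [hh])
      have hm1 : v (A (.inr j2)) (B (.inr j2)) ∈ ℓ j1 := by
        rw [hvv]
        exact Submodule.smul_mem _ _ (hmem _ j1 rfl)
      have hm2 : v (A (.inr j2)) (B (.inr j2)) ∈ ℓ j2 := hmem _ j2 rfl
      have hbot := hdisj j1 j2 hj12
      have : v (A (.inr j2)) (B (.inr j2)) ∈ ℓ j1 ⊓ ℓ j2 := ⟨hm1, hm2⟩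
      rw [hbot] at this
      exact hv (Sum.inr j2) (Submodule.mem_bot ℂ |>.mp this)
  obtain ⟨P, hPne, hPdeg, hPeval⟩ := key_poly hGhom hGne
  set S : Finset (Fin 4 ⊕ Fin 4) := Finset.univ.filter (fun k => B k ≠ 0) with hS
  have hcardS : 7 ≤ S.card := by
    have h1 : (Finset.univ.filter (fun k => ¬ B k ≠ 0)).card ≤ 1 := by
      refine Finset.card_le_one.mpr fun a ha b hb => ?_
      simp only [Finset.mem_filter, not_not] at ha hb
      by_contra hne2
      exact hprop a b hne2 (by rw [ha.2, hb.2]; ring)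
    have h2 := Finset.card_filter_add_card_filter_not
      (s := (Finset.univ : Finset (Fin 4 ⊕ Fin 4))) (p := fun k => B k ≠ 0)
    have h3 : (Finset.univ : Finset (Fin 4 ⊕ Fin 4)).card = 8 := by simp
    rw [← hS] at h2
    omega
  set T : Finset ℂ := S.image (fun k => A k / B k) with hT
  have hinj : Set.InjOn (fun k => A k / B k) S := by
    intro x hx y hy hxy
    have hBx : B x ≠ 0 := (Finset.mem_filter.mp (Finset.mem_coe.mp hx)).2
    have hBy : B y ≠ 0 := (Finset.mem_filter.mp (Finset.mem_coe.mp hy)).2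
    by_contra hne2
    apply hprop x y hne2
    have := (div_eq_div_iff hBx hBy).mp hxy
    linear_combination this
  have hcardT : 7 ≤ T.card := by
    rw [hT, Finset.card_image_of_injOn hinj]
    exact hcardS
  have hroots : ∀ z ∈ T, P.eval z = 0 := by
    intro z hz
    obtain ⟨k, hk, rfl⟩ := Finset.mem_image.mp hz
    have hBk : B k ≠ 0 := (Finset.mem_filter.mp hk).2
    rw [hPeval]
    have heq : ![A k, B k] = fun j => B k * ![A k / B k, 1] j := by
      funext j
      fin_cases j
      · show A k = B k * (A k / B k)
        field_simp
      · show B k = B k * 1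
        ring
    have h0 := hG0 k
    rw [show ![(ab k).1, (ab k).2] = ![A k, B k] from rfl, heq,
      aux_eval_smul hGhom] at h0
    rcases mul_eq_zero.mp h0 with hh | hh
    · exact absurd (pow_eq_zero_iff (by norm_num) |>.mp hh) hBk
    · exact hh
  have hPzero := Polynomial.eq_zero_of_natDegree_lt_card_of_eval_eq_zero' P T hroots
    (by omega)
  exact hPne hPzero
end

section
/- Let d ≥ 1 be odd, let q(z) = z₀² + z₁² + z₂² + z₃² on ℂ⁴, and let Q_E = {[z] ∈ ℙ³(ℂ) : q(z) = 0}. Let p₁, …, p_{2d-2} be distinct points of Q_E and let ℓ₁, …, ℓ₄ ⊆ ℂ⁴ be 2-dimensional complex subspaces with ℓᵢ ∩ ℓⱼ = {0} for i ≠ j, on each of which q vanishes identically, such that no pₖ lies in any ℙ(ℓⱼ). Then there do not exist homogeneous polynomials f₀,…,f₃ ∈ ℝ[s,t] of degree d, not all zero, such that the image of the associated map contains every pₖ and meets every ℙ(ℓⱼ). -/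
open MvPolynomial

lemma degAux (d : Fin 2 →₀ ℕ) : (Finsupp.weight (1 : Fin 2 → ℕ)) d = d 0 + d 1 := by
  rw [show (1 : Fin 2 → ℕ) = fun _ => 1 from rfl, ← Finsupp.degree_eq_weight_one]
  show ∑ i ∈ d.support, d i = _
  rw [Finset.sum_subset (Finset.subset_univ d.support)]
  · exact Fin.sum_univ_two d
  · intro x _ hx
    simpa using Finsupp.notMem_support_iff.mp hx

lemma eval_mul_smul {R : Type*} [CommSemiring R] {n : ℕ} {φ : MvPolynomial (Fin 2) R}
    (hφ : φ.IsHomogeneous n) (c : R) (x : Fin 2 → R) :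
    eval (fun i => c * x i) φ = c ^ n * eval x φ := by
  rw [eval_eq', eval_eq', Finset.mul_sum]
  apply Finset.sum_congr rfl
  intro m hm
  have hdeg : m 0 + m 1 = n := by
    have h1 := hφ (mem_support_iff.mp hm)
    rw [← degAux m]; exact h1
  rw [Fin.prod_univ_two, Fin.prod_univ_two, mul_pow, mul_pow, ← hdeg, pow_add]
  ring

lemma eval_aeval_poly {R : Type*} [CommSemiring R] (φ : MvPolynomial (Fin 2) R)
    (v : Fin 2 → Polynomial R) (x : R) :
    Polynomial.eval x (MvPolynomial.aeval v φ) =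
      eval (fun i => Polynomial.eval x (v i)) φ := by
  have h := MvPolynomial.eval₂_comp_left (Polynomial.evalRingHom x)
      (algebraMap R (Polynomial R)) v φ
  have h2 : (Polynomial.evalRingHom x).comp (algebraMap R (Polynomial R)) = RingHom.id R := by
    ext r; simp
  rw [MvPolynomial.aeval_def]
  show Polynomial.evalRingHom x (eval₂ (algebraMap R (Polynomial R)) v φ) = _
  rw [h, h2, MvPolynomial.eval₂_eq_eval_map, MvPolynomial.map_id]
  rfl

lemma natDegree_aeval_le {R : Type*} [CommRing R] {n : ℕ} {φ : MvPolynomial (Fin 2) R}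
    (hφ : φ.IsHomogeneous n) :
    (MvPolynomial.aeval ![Polynomial.X, 1] φ : Polynomial R).natDegree ≤ n := by
  rw [MvPolynomial.aeval_def, eval₂_eq']
  apply Polynomial.natDegree_sum_le_of_forall_le
  intro m hm
  have hdeg : m 0 + m 1 = n := by
    have h1 := hφ (mem_support_iff.mp hm)
    rw [← degAux m]; exact h1
  rw [Fin.prod_univ_two]
  simp only [Matrix.cons_val_zero, Matrix.cons_val_one, Matrix.head_cons, one_pow, mul_one]
  refine (Polynomial.natDegree_C_mul_le _ _).trans ?_
  · simpa using (Polynomial.natDegree_X_pow_le (R := R) (m 0)).trans (by omega)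

lemma eval_map_comm {σ : Type*} {R S : Type*} [CommSemiring R] [CommSemiring S] (φ : R →+* S)
    (v : σ → R) (p : MvPolynomial σ R) :
    eval (fun i => φ (v i)) (map φ p) = φ (eval v p) := by
  induction p using MvPolynomial.induction_on with
  | C a => simp
  | add p q hp hq => simp [hp, hq]
  | mul_X p i hp => simp [hp]

/-- For odd `d`, `2d − 2` distinct points on the empty quadric together with
four pairwise disjoint isotropic lines avoiding them cannot all be met by a degree-`d` rational
curve parametrized by real forms. -/
theorem no_odd_degree_real_curve_through_points_and_four_lines
    (d : ℕ) (hd : 1 ≤ d) (hodd : Odd d)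
    (p : Fin (2 * d - 2) → Projectivization ℂ (Fin 4 → ℂ))
    (hpdist : Function.Injective p)
    (hpQ : ∀ k, ∑ i, ((p k).rep i) ^ 2 = 0)
    (ℓ : Fin 4 → Submodule ℂ (Fin 4 → ℂ))
    (hdim : ∀ j, Module.finrank ℂ (ℓ j) = 2)
    (hdisj : ∀ i j, i ≠ j → ℓ i ⊓ ℓ j = ⊥)
    (hiso : ∀ j, ∀ v ∈ ℓ j, ∑ k, (v k) ^ 2 = 0)
    (havoid : ∀ k j, (p k).rep ∉ ℓ j) :
    ¬ ∃ f : Fin 4 → MvPolynomial (Fin 2) ℝ,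
      (∀ i, (f i).IsHomogeneous d) ∧ (∃ i, f i ≠ 0) ∧
      (∀ k, p k ∈ imageSet f) ∧
      (∀ j, ∃ a b : ℂ,
        (fun i => eval ![a, b] (map (algebraMap ℝ ℂ) (f i))) ≠ 0 ∧
        (fun i => eval ![a, b] (map (algebraMap ℝ ℂ) (f i))) ∈ ℓ j) := by
  rintro ⟨f, hfhom, hex, himg, hline⟩
  classical
  have hFhom : ∀ i, (map (algebraMap ℝ ℂ) (f i)).IsHomogeneous d :=
    fun i => (hfhom i).map _
  choose ap bp hp0 hpmk using himg
  choose aq bq hq0 hqmem using hline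
  set A : Fin (2*d-2) ⊕ Fin 4 → ℂ := Sum.elim ap aq with hA
  set B : Fin (2*d-2) ⊕ Fin 4 → ℂ := Sum.elim bp bq with hB
  set w : (Fin (2*d-2) ⊕ Fin 4) → Fin 4 → ℂ :=
    fun c i => eval ![A c, B c] (map (algebraMap ℝ ℂ) (f i)) with hw
  have hwne : ∀ c, w c ≠ 0 := by
    rintro (k | j)
    · exact hp0 k
    · exact hq0 j
  -- the representative of `p k` is a unit multiple of `w (Sum.inl k)`
  have hrep : ∀ k, ∃ u : ℂˣ, (p k).rep = fun i => (u : ℂ) * w (Sum.inl k) i := by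
    intro k
    obtain ⟨u, hu⟩ := Projectivization.exists_smul_eq_mk_rep ℂ _ (hp0 k)
    refine ⟨u, ?_⟩
    rw [hpmk k, ← hu]
    rfl
  -- every parameter point is a root of the quadric form
  have hwz : ∀ c, ∑ i, (w c i) ^ 2 = 0 := by
    rintro (k | j)
    · obtain ⟨u, hu⟩ := hrep k
      have h0 := hpQ k
      rw [hu] at h0
      have h1 : (u : ℂ) ^ 2 * ∑ i, (w (Sum.inl k) i) ^ 2 = 0 := by
        rw [Finset.mul_sum]
        rw [← h0]
        apply Finset.sum_congr rfl
        intro i _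
        ring
      rcases mul_eq_zero.mp h1 with h | h
      · exact absurd (pow_eq_zero_iff two_ne_zero |>.mp h) u.ne_zero
      · exact h
    · exact hiso j _ (hqmem j)
  -- no parameter point is zero
  have hABne : ∀ c, A c ≠ 0 ∨ B c ≠ 0 := by
    intro c
    by_contra h
    push_neg at h
    obtain ⟨hA0, hB0⟩ := h
    apply hwne c
    funext i
    have hv : ![A c, B c] = fun j => (0:ℂ) * (fun _ => (1:ℂ)) j := by
      funext j
      fin_cases j
      · show A c = 0 * 1
        rw [hA0, zero_mul]
      · show B c = 0 * 1
        rw [hB0, zero_mul]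
    show eval ![A c, B c] (map (algebraMap ℝ ℂ) (f i)) = 0
    rw [hv, eval_mul_smul (hFhom i), zero_pow (by omega), zero_mul]
  -- pairwise non-proportionality
  have hdet : ∀ c c', A c * B c' = A c' * B c → c = c' := by
    intro c c' hdeteq
    by_contra hne
    -- find t ≠ 0 with (A c', B c') = t • (A c, B c)
    obtain ⟨t, ht, hA', hB'⟩ : ∃ t : ℂ, t ≠ 0 ∧ A c' = t * A c ∧ B c' = t * B c := by
      rcases hABne c with hAc | hBc
      · have hAc' : A c' ≠ 0 := by
          intro h0
          have hBc'0 : B c' = 0 := by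
            have h1 : A c * B c' = 0 := by rw [hdeteq, h0, zero_mul]
            exact (mul_eq_zero.mp h1).resolve_left hAc
          rcases hABne c' with h | h
          · exact h h0
          · exact h hBc'0
        refine ⟨A c' / A c, div_ne_zero hAc' hAc, by field_simp, ?_⟩
        field_simp
        first
          | linear_combination hdeteq
          | linear_combination -hdeteq
          | linear_combination B c' * hdeteq
      · have hBc' : B c' ≠ 0 := by
          intro h0
          have hAc'0 : A c' = 0 := by
            have h1 : A c' * B c = 0 := by rw [← hdeteq, h0, mul_zero]
            exact (mul_eq_zero.mp h1).resolve_right hBc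
          rcases hABne c' with h | h
          · exact h hAc'0
          · exact h h0
        refine ⟨B c' / B c, div_ne_zero hBc' hBc, ?_, by field_simp⟩
        field_simp
        first
          | linear_combination hdeteq
          | linear_combination -hdeteq
          | linear_combination A c' * hdeteq
    -- then the images are proportional
    have hwprop : w c' = fun i => t ^ d * w c i := by
      funext i
      have hv : ![A c', B c'] = fun j => t * (![A c, B c] j) := by
        funext j
        fin_cases j
        · show A c' = t * A c
          exact hA'
        · show B c' = t * B c
          exact hB'
      show eval ![A c', B c'] (map (algebraMap ℝ ℂ) (f i)) = _
      rw [hv, eval_mul_smul (hFhom i)]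
    have htd : t ^ d ≠ 0 := pow_ne_zero _ ht
    -- case analysis
    rcases c with k | j <;> rcases c' with k' | j'
    · -- two marked points coincide
      have hkk : k ≠ k' := fun h => hne (by rw [h])
      apply hkk
      apply hpdist
      rw [hpmk k, hpmk k', Projectivization.mk_eq_mk_iff']
      refine ⟨(t ^ d)⁻¹, ?_⟩
      show (t ^ d)⁻¹ • w (Sum.inl k') = w (Sum.inl k)
      rw [hwprop]
      funext i
      simp only [Pi.smul_apply, smul_eq_mul]
      rw [← mul_assoc, inv_mul_cancel₀ htd, one_mul]
    · -- marked point on a line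
      apply havoid k j'
      obtain ⟨u, hu⟩ := hrep k
      rw [hu]
      have hwk : (fun i => (u:ℂ) * w (Sum.inl k) i) = ((u:ℂ) * (t ^ d)⁻¹) • w (Sum.inr j') := by
        funext i
        have h2 := congrFun hwprop i
        rw [Pi.smul_apply, smul_eq_mul, h2, ← mul_assoc, mul_assoc ((u:ℂ)) ((t ^ d)⁻¹) (t ^ d),
          inv_mul_cancel₀ htd, mul_one]
      rw [hwk]
      exact Submodule.smul_mem _ _ (hqmem j')
    · -- marked point on a line (other order)
      apply havoid k' j
      obtain ⟨u, hu⟩ := hrep k'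
      rw [hu]
      have hwk : (fun i => (u:ℂ) * w (Sum.inl k') i) = ((u:ℂ) * t ^ d) • w (Sum.inr j) := by
        funext i
        have h2 := congrFun hwprop i
        rw [Pi.smul_apply, smul_eq_mul, h2, mul_assoc]
      rw [hwk]
      exact Submodule.smul_mem _ _ (hqmem j)
    · -- two lines intersect
      have hjj : j ≠ j' := fun h => hne (by rw [h])
      apply hwne (Sum.inr j')
      rw [← Submodule.mem_bot (R := ℂ), ← hdisj j j' hjj]
      refine Submodule.mem_inf.mpr ⟨?_, hqmem j'⟩
      rw [hwprop]
      exact Submodule.smul_mem _ _ (hqmem j)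
  -- the complexified quadric form
  set G : MvPolynomial (Fin 2) ℂ := ∑ i, (map (algebraMap ℝ ℂ) (f i)) ^ 2 with hG
  have hGhom : G.IsHomogeneous (d * 2) :=
    IsHomogeneous.sum _ _ _ (fun i _ => (hFhom i).pow 2)
  have hGeval : ∀ c, eval ![A c, B c] G = 0 := by
    intro c
    rw [hG]
    rw [map_sum (eval ![A c, B c])]
    simp only [map_pow]
    exact hwz c
  set P : Polynomial ℂ := MvPolynomial.aeval ![Polynomial.X, 1] G with hP
  have hPdeg : P.natDegree ≤ d * 2 := natDegree_aeval_le hGhom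
  have hPeval : ∀ x : ℂ, P.eval x = eval ![x, 1] G := by
    intro x
    rw [hP, eval_aeval_poly]
    have hv : (fun i => Polynomial.eval x (![(Polynomial.X : Polynomial ℂ), 1] i)) = ![x, 1] := by
      funext j
      fin_cases j
      · show Polynomial.eval x Polynomial.X = x
        simp
      · show Polynomial.eval x (1 : Polynomial ℂ) = 1
        simp
    rw [hv]
  -- enough roots
  set S : Finset (Fin (2*d-2) ⊕ Fin 4) := Finset.univ.filter (fun c => B c ≠ 0) with hS
  have hScard : 2 * d + 1 ≤ S.card := by
    rw [hS]
    have hT : (Finset.univ.filter (fun c => ¬ B c ≠ 0)).card ≤ 1 := by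
      apply Finset.card_le_one.mpr
      intro a ha b hb
      simp only [Finset.mem_filter, not_not] at ha hb
      exact hdet a b (by rw [ha.2, hb.2]; ring)
    have hsum : (Finset.univ.filter (fun c => B c ≠ 0)).card
        + (Finset.univ.filter (fun c => ¬ B c ≠ 0)).card
        = (2*d-2) + 4 := by
      rw [Finset.card_filter_add_card_filter_not]
      simp
    omega
  have hP0 : P = 0 := by
    apply Polynomial.eq_zero_of_natDegree_lt_card_of_eval_eq_zero' P
      (S.image (fun c => A c / B c))
    · intro x hx
      obtain ⟨c, hc, rfl⟩ := Finset.mem_image.mp hx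
      have hBc : B c ≠ 0 := (Finset.mem_filter.mp hc).2
      rw [hPeval]
      have hv : ![A c, B c] = fun j => B c * (![A c / B c, 1] j) := by
        funext j
        fin_cases j
        · show A c = B c * (A c / B c)
          field_simp
        · show B c = B c * 1
          rw [mul_one]
      have h0 := hGeval c
      rw [hv, eval_mul_smul hGhom] at h0
      rcases mul_eq_zero.mp h0 with h | h
      · exact absurd (pow_eq_zero_iff (by omega) |>.mp h) hBc
      · exact h
    · have himg : (S.image (fun c => A c / B c)).card = S.card := by
        apply Finset.card_image_of_injOn
        intro c hc c' hc' hcc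
        have hBc : B c ≠ 0 := (Finset.mem_filter.mp hc).2
        have hBc' : B c' ≠ 0 := (Finset.mem_filter.mp hc').2
        apply hdet
        have := (div_eq_div_iff hBc hBc').mp hcc
        linear_combination this
      omega
  -- real points on the line t = 1 kill each f i
  have hreal : ∀ (x : ℝ) (i : Fin 4), eval ![x, 1] (f i) = 0 := by
    intro x i
    have h3 : eval ![(x:ℂ), 1] G = 0 := by
      rw [← hPeval, hP0, Polynomial.eval_zero]
    have h4 : eval ![(x:ℂ), 1] G = algebraMap ℝ ℂ (∑ i, (eval ![x, 1] (f i)) ^ 2) := by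
      rw [hG, map_sum (eval ![(x:ℂ), 1]), map_sum (algebraMap ℝ ℂ)]
      apply Finset.sum_congr rfl
      intro i _
      rw [map_pow, map_pow]
      congr 1
      have h6 := eval_map_comm (algebraMap ℝ ℂ) ![x, 1] (f i)
      have hv : (fun j => algebraMap ℝ ℂ (![x, 1] j)) = ![(x : ℂ), 1] := by
        funext j
        fin_cases j
        · show algebraMap ℝ ℂ x = (x : ℂ)
          rfl
        · show algebraMap ℝ ℂ 1 = 1
          exact map_one _
      rw [hv] at h6
      exact h6
    rw [h4] at h3
    have h5 : ∑ i, (eval ![x, 1] (f i)) ^ 2 = 0 :=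
      (algebraMap ℝ ℂ).injective (by rw [map_zero]; exact h3)
    have h6 := (Finset.sum_eq_zero_iff_of_nonneg (fun i _ => sq_nonneg _)).mp h5 i
      (Finset.mem_univ i)
    exact pow_eq_zero_iff two_ne_zero |>.mp h6
  -- hence each f i vanishes identically
  have hfz : ∀ i, f i = 0 := by
    intro i
    have hb : ∀ a b : ℝ, b ≠ 0 → eval ![a, b] (f i) = 0 := by
      intro a b hbne
      have hv : ![a, b] = fun j => b * (![a / b, 1] j) := by
        funext j
        fin_cases j
        · show a = b * (a / b)
          field_simp
        · show b = b * 1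
          rw [mul_one]
      rw [hv, eval_mul_smul (hfhom i), hreal (a / b) i, mul_zero]
    have hall : ∀ a b : ℝ, eval ![a, b] (f i) = 0 := by
      intro a b
      set Q : Polynomial ℝ := MvPolynomial.aeval ![Polynomial.C a, Polynomial.X] (f i) with hQ
      have hQe : ∀ t : ℝ, Q.eval t = eval ![a, t] (f i) := by
        intro t
        rw [hQ, eval_aeval_poly]
        have hv : (fun j => Polynomial.eval t (![Polynomial.C a, Polynomial.X] j)) = ![a, t] := by
          funext j
          fin_cases j
          · show Polynomial.eval t (Polynomial.C a) = a
            simp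
          · show Polynomial.eval t Polynomial.X = t
            simp
        rw [hv]
      have hQ0 : Q = 0 := by
        apply Polynomial.eq_zero_of_infinite_isRoot
        have hsub : {t : ℝ | t ≠ 0} ⊆ {x | Q.IsRoot x} := by
          intro t ht
          simp only [Set.mem_setOf_eq, Polynomial.IsRoot.def]
          rw [hQe]
          exact hb a t ht
        have hinf : ({t : ℝ | t ≠ 0}).Infinite := by
          have h0 : {t : ℝ | t ≠ 0} = ({0} : Set ℝ)ᶜ := by
            ext t; simp
          rw [h0]
          exact (Set.finite_singleton 0).infinite_compl
        exact Set.Infinite.mono hsub hinf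
      rw [← hQe b, hQ0, Polynomial.eval_zero]
    apply MvPolynomial.funext
    intro x
    have hx : x = ![x 0, x 1] := by funext j; fin_cases j <;> rfl
    rw [hx, hall (x 0) (x 1)]
    simp
  obtain ⟨i₀, hi₀⟩ := hex
  exact hi₀ (hfz i₀)
end

section
/- Let p₁, …, p₁₀ be ten distinct points of the empty conic C_E = {[x:y:z] ∈ ℙ²(ℂ) : x² + y² + z² = 0}. Then there do not exist homogeneous polynomials f₀, f₁, f₂ ∈ ℝ[s,t] of degree 4, not all zero, such that every pₖ lies in the image of the associated map [s:t] ↦ [f₀(s,t) : f₁(s,t) : f₂(s,t)]. -/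
open MvPolynomial

private lemma my_eval_smul {σ R : Type*} [CommSemiring R] {n : ℕ}
    {φ : MvPolynomial σ R} (h : φ.IsHomogeneous n) (c : R) (v : σ → R) :
    eval (fun i => c * v i) φ = c ^ n * eval v φ := by
  rw [eval_eq, eval_eq, Finset.mul_sum]
  apply Finset.sum_congr rfl
  intro d hd
  rw [mem_support_iff] at hd
  have hdeg : ∑ i ∈ d.support, d i = n := by
    simpa [Finsupp.weight_apply, Finsupp.sum] using h hd
  calc coeff d φ * ∏ i ∈ d.support, (c * v i) ^ d i
      = coeff d φ * ((∏ i ∈ d.support, c ^ d i) * ∏ i ∈ d.support, (v i) ^ d i) := by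
        rw [← Finset.prod_mul_distrib]; simp [mul_pow]
    _ = c ^ n * (coeff d φ * ∏ i ∈ d.support, (v i) ^ d i) := by
        rw [Finset.prod_pow_eq_pow_sum, hdeg]; ring

private lemma my_natDegree_le {n : ℕ} {φ : MvPolynomial (Fin 2) ℂ} (h : φ.IsHomogeneous n)
    (w : Fin 2 → Polynomial ℂ) (hw : ∀ i, (w i).natDegree ≤ 1) :
    (MvPolynomial.eval₂ Polynomial.C w φ).natDegree ≤ n := by
  rw [eval₂_eq]
  apply Polynomial.natDegree_sum_le_of_forall_le
  intro d hd
  rw [mem_support_iff] at hd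
  have hdeg : ∑ i ∈ d.support, d i = n := by
    simpa [Finsupp.weight_apply, Finsupp.sum] using h hd
  calc (Polynomial.C (coeff d φ) * ∏ i ∈ d.support, w i ^ d i).natDegree
      ≤ (Polynomial.C (coeff d φ)).natDegree + (∏ i ∈ d.support, w i ^ d i).natDegree :=
        Polynomial.natDegree_mul_le
    _ ≤ 0 + ∑ i ∈ d.support, (w i ^ d i).natDegree := by
        gcongr
        · simp
        · exact Polynomial.natDegree_prod_le _ _
    _ ≤ ∑ i ∈ d.support, d i := by
        rw [zero_add]
        apply Finset.sum_le_sum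
        intro i _
        calc (w i ^ d i).natDegree ≤ d i * (w i).natDegree := Polynomial.natDegree_pow_le
          _ ≤ d i * 1 := by gcongr; exact hw i
          _ = d i := mul_one _
    _ = n := hdeg

private lemma my_funext {φ : MvPolynomial (Fin 2) ℂ} (h : ∀ x y : ℂ, eval ![x, y] φ = 0) :
    φ = 0 := by
  apply MvPolynomial.funext
  intro v
  have hv : v = ![v 0, v 1] := by funext i; fin_cases i <;> simp
  rw [hv, map_zero]
  exact h _ _

private lemma my_eval_eval₂ {φ : MvPolynomial (Fin 2) ℂ} (w : Fin 2 → Polynomial ℂ) (x : ℂ) :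
    (MvPolynomial.eval₂ Polynomial.C w φ).eval x = eval (fun i => (w i).eval x) φ := by
  have h := MvPolynomial.eval₂_comp_left (Polynomial.evalRingHom x) Polynomial.C w φ
  simp only [Polynomial.coe_evalRingHom] at h
  rw [h]
  have hc : (Polynomial.evalRingHom x).comp Polynomial.C = RingHom.id ℂ := by
    ext c; simp
  rw [hc]
  rfl

/-- No rational quartic curve in `ℙ²` parametrized by real binary quartic forms
passes through ten distinct points of the empty conic `{x² + y² + z² = 0}`. -/
theorem no_real_quartic_through_ten_points_of_empty_conic
    (p : Fin 10 → Projectivization ℂ (Fin 3 → ℂ))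
    (hpdist : Function.Injective p)
    (hpC : ∀ k, ∑ i, ((p k).rep i) ^ 2 = 0) :
    ¬ ∃ f : Fin 3 → MvPolynomial (Fin 2) ℝ,
      (∀ i, (f i).IsHomogeneous 4) ∧ (∃ i, f i ≠ 0) ∧
      ∀ k, ∃ (a b : ℂ) (h : (fun i => eval ![a, b] (map (algebraMap ℝ ℂ) (f i))) ≠ 0),
        p k = Projectivization.mk ℂ _ h := by
  rintro ⟨f, hhom, ⟨i₀, hi₀⟩, himg⟩
  choose a b hv hmk using himg
  set F : Fin 3 → MvPolynomial (Fin 2) ℂ := fun i => map (algebraMap ℝ ℂ) (f i) with hFdef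
  have hFhom : ∀ i, (F i).IsHomogeneous 4 := fun i => (hhom i).map _
  set g : MvPolynomial (Fin 2) ℝ := ∑ i, (f i) ^ 2 with hgdef
  have hghom : g.IsHomogeneous 8 := by
    apply MvPolynomial.IsHomogeneous.sum
    intro i _
    simpa using (hhom i).pow 2
  have hgne : g ≠ 0 := by
    intro h0
    apply hi₀
    apply MvPolynomial.funext
    intro v
    rw [map_zero]
    have h1 : eval v g = 0 := by rw [h0, map_zero]
    rw [hgdef] at h1
    simp only [map_sum, map_pow] at h1
    rw [Finset.sum_eq_zero_iff_of_nonneg (fun i _ => sq_nonneg _)] at h1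
    exact pow_eq_zero_iff (two_ne_zero) |>.1 (h1 i₀ (Finset.mem_univ _))
  set G : MvPolynomial (Fin 2) ℂ := map (algebraMap ℝ ℂ) g with hGdef
  have hGhom : G.IsHomogeneous 8 := hghom.map _
  have hGne : G ≠ 0 := fun h0 =>
    hgne (MvPolynomial.map_injective _ (algebraMap ℝ ℂ).injective (by rw [map_zero, ← hGdef]; exact h0))
  have hGF : G = ∑ i, (F i) ^ 2 := by rw [hGdef, hgdef]; simp [map_sum, map_pow]; rfl
  -- every point (a k, b k) is a zero of G
  have hGeval : ∀ k, eval ![a k, b k] G = 0 := by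
    intro k
    obtain ⟨c, hc⟩ := (Projectivization.mk_eq_mk_iff ℂ _ _ ((p k).rep_nonzero) (hv k)).1
      (by rw [Projectivization.mk_rep]; exact hmk k)
    have h1 := hpC k
    rw [← hc] at h1
    have h2 : (c : ℂ) ^ 2 * ∑ i, (eval ![a k, b k] (F i)) ^ 2 = 0 := by
      rw [Finset.mul_sum]
      rw [← h1]
      apply Finset.sum_congr rfl
      intro i _
      simp only [Pi.smul_apply, Units.smul_def, smul_eq_mul]
      ring
    have h3 : ∑ i, (eval ![a k, b k] (F i)) ^ 2 = 0 := by
      rcases mul_eq_zero.1 h2 with h | h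
      · exact absurd h (pow_ne_zero _ c.ne_zero)
      · exact h
    rw [hGF]
    simpa [map_sum, map_pow] using h3
  -- (a k, b k) ≠ (0, 0)
  have habne : ∀ k, ¬(a k = 0 ∧ b k = 0) := by
    rintro k ⟨ha, hb⟩
    apply hv k
    funext i
    have h2 := my_eval_smul (hFhom i) 0 ![a k, b k]
    have h0 : (fun j => (0 : ℂ) * ![a k, b k] j) = ![a k, b k] := by
      funext j; fin_cases j <;> simp [ha, hb]
    rw [h0] at h2
    simp only [Pi.zero_apply]
    rw [h2]
    ring
  -- pairwise non-proportionality of the (a k, b k)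
  have hprop : ∀ j k : Fin 10, (∃ c : ℂ, a j = c * a k ∧ b j = c * b k) → j = k := by
    rintro j k ⟨c, hca, hcb⟩
    have hcne : c ≠ 0 := by
      rintro rfl
      exact habne j ⟨by simp [hca], by simp [hcb]⟩
    apply hpdist
    rw [hmk j, hmk k, Projectivization.mk_eq_mk_iff']
    refine ⟨c ^ 4, ?_⟩
    funext i
    simp only [Pi.smul_apply, smul_eq_mul]
    have h2 := my_eval_smul (hFhom i) c ![a k, b k]
    have h0 : (fun jj => c * ![a k, b k] jj) = ![a j, b j] := by
      funext jj; fin_cases jj <;> simp [hca, hcb]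
    rw [h0] at h2
    exact h2.symm
  -- choose lam so that b k + lam * a k ≠ 0 for all k
  obtain ⟨lam, hlam⟩ :=
    Infinite.exists_notMem_finset (Finset.image (fun k => -(b k) / (a k)) Finset.univ)
  have hbl : ∀ k, b k + lam * a k ≠ 0 := by
    intro k h0
    by_cases ha : a k = 0
    · exact habne k ⟨ha, by simpa [ha] using h0⟩
    · apply hlam
      rw [Finset.mem_image]
      refine ⟨k, Finset.mem_univ _, ?_⟩
      field_simp
      linear_combination -h0
  -- the univariate polynomial q(x) = G(x, 1 - lam x)
  set w : Fin 2 → Polynomial ℂ := ![Polynomial.X, 1 - Polynomial.C lam * Polynomial.X] with hwdef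
  set q : Polynomial ℂ := MvPolynomial.eval₂ Polynomial.C w G with hqdef
  have hqeval : ∀ x : ℂ, q.eval x = eval ![x, 1 - lam * x] G := by
    intro x
    rw [hqdef, my_eval_eval₂]
    have harg : (fun i => (w i).eval x) = ![x, 1 - lam * x] := by
      funext i; fin_cases i <;> simp [hwdef]
    rw [harg]
  have hqdeg : q.natDegree ≤ 8 := by
    apply my_natDegree_le hGhom
    intro i
    fin_cases i
    · simp [hwdef]
    · show (1 - Polynomial.C lam * Polynomial.X).natDegree ≤ 1
      apply le_trans (Polynomial.natDegree_sub_le _ _)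
      simp only [Polynomial.natDegree_one, max_le_iff]
      exact ⟨Nat.zero_le _, le_trans (Polynomial.natDegree_C_mul_le _ _) (by simp)⟩
  have hqne : q ≠ 0 := by
    intro h0
    apply hGne
    have hval : ∀ A B : ℂ, B + lam * A ≠ 0 → eval ![A, B] G = 0 := by
      intro A B hu
      set u := B + lam * A with hudef
      have hx : q.eval (A / u) = 0 := by rw [h0]; simp
      rw [hqeval] at hx
      have h2 := my_eval_smul hGhom u ![A / u, 1 - lam * (A / u)]
      have harg : (fun j => u * ![A / u, 1 - lam * (A / u)] j) = ![A, B] := by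
        funext j; fin_cases j
        · simp only [Fin.zero_eta, Matrix.cons_val_zero]
          field_simp
        · simp only [Fin.mk_one, Matrix.cons_val_one, Matrix.head_cons, Matrix.cons_val_zero]
          field_simp
          ring
      rw [harg, hx, mul_zero] at h2
      exact h2
    apply my_funext
    intro A B
    set r : Polynomial ℂ := MvPolynomial.eval₂ Polynomial.C ![Polynomial.C A, Polynomial.X] G
      with hrdef
    have hreval : ∀ y : ℂ, r.eval y = eval ![A, y] G := by
      intro y
      rw [hrdef, my_eval_eval₂]
      have harg : (fun i => (![Polynomial.C A, Polynomial.X] i).eval y) = ![A, y] := by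
        funext i; fin_cases i <;> simp
      rw [harg]
    have hr0 : r = 0 := by
      apply Polynomial.eq_zero_of_infinite_isRoot
      apply Set.Infinite.mono (s := ({-(lam * A)}ᶜ : Set ℂ))
      · intro y hy
        simp only [Set.mem_compl_iff, Set.mem_singleton_iff] at hy
        show r.IsRoot y
        show r.eval y = 0
        rw [hreval]
        apply hval
        intro hc
        apply hy
        linear_combination hc
      · exact (Set.finite_singleton _).infinite_compl
    rw [← hreval B, hr0, Polynomial.eval_zero]
  -- the ten distinct roots
  set x : Fin 10 → ℂ := fun k => a k / (b k + lam * a k) with hxdef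
  have hroot : ∀ k, q.eval (x k) = 0 := by
    intro k
    rw [hqeval]
    have hu := hbl k
    have h2 := my_eval_smul hGhom (b k + lam * a k) ![x k, 1 - lam * x k]
    have harg : (fun j => (b k + lam * a k) * ![x k, 1 - lam * x k] j) = ![a k, b k] := by
      funext j; fin_cases j
      · simp only [Fin.zero_eta, Matrix.cons_val_zero, hxdef]
        field_simp
      · simp only [Fin.mk_one, Matrix.cons_val_one, Matrix.head_cons, Matrix.cons_val_zero, hxdef]
        field_simp
        ring
    rw [harg, hGeval k] at h2
    rcases mul_eq_zero.1 h2.symm with h | h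
    · exact absurd h (pow_ne_zero _ hu)
    · exact h
  have hxinj : Function.Injective x := by
    intro j k hjk
    apply hprop
    have huj := hbl j
    have huk := hbl k
    rw [hxdef] at hjk
    simp only [div_eq_div_iff huj huk] at hjk
    refine ⟨(b j + lam * a j) / (b k + lam * a k), ?_, ?_⟩
    · field_simp
      linear_combination hjk
    · field_simp
      linear_combination (-lam) * hjk
  have hcard : (10 : ℕ) ≤ 8 := by
    calc (10 : ℕ) = (Finset.univ.image x).card := by
          rw [Finset.card_image_of_injective _ hxinj, Finset.card_univ, Fintype.card_fin]
      _ ≤ q.roots.toFinset.card := by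
          apply Finset.card_le_card
          intro y hy
          rw [Finset.mem_image] at hy
          obtain ⟨k, -, rfl⟩ := hy
          rw [Multiset.mem_toFinset, Polynomial.mem_roots hqne]
          exact hroot k
      _ ≤ Multiset.card q.roots := Multiset.toFinset_card_le _
      _ ≤ q.natDegree := Polynomial.card_roots' q
      _ ≤ 8 := hqdeg
  norm_num at hcard
end
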